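/- The minimum of the EUC objective G over the polyhedron X_I is attained and equals the dynamic-programming value V_up*(0). -/

import Mathlib

namespace EUC

/-- Index set `TK¹ = {(1,k) : k ∈ [max(t0,1), T]}`. -/
noncomputable def TK1 (t0 T : ℤ) : Finset (ℤ × ℤ) :=
  (Finset.Icc (max t0 1) T).image fun k => ((1 : ℤ), k)

/-- Index set `TK² = {(t,k) : t ∈ [t0+ℓ+1, T], k ∈ [min(t+L−1, T), T]}`. -/
noncomputable def TK2 (t0 T L l : ℤ) : Finset (ℤ × ℤ) :=
  (Finset.Icc (t0 + l + 1) T).biUnion fun t =>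
    (Finset.Icc (min (t + L - 1) T) T).image fun k => (t, k)

/-- Index set `TK = TK¹ ∪ TK²`. -/
noncomputable def TK (t0 T L l : ℤ) : Finset (ℤ × ℤ) := TK1 t0 T ∪ TK2 t0 T L l

/-- Index set `KT = {(k,t) : k ∈ [t0, T−ℓ−1], t ∈ [k+ℓ+1, T]}`. -/
noncomputable def KT (t0 T l : ℤ) : Finset (ℤ × ℤ) :=
  (Finset.Icc t0 (T - l - 1)).biUnion fun k =>
    (Finset.Icc (k + l + 1) T).image fun t => (k, t)

/-- The space of EUC vectors `(w, y, z, θ, q, φ)`. -/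
abbrev Pt : Type :=
  (ℤ → ℝ) × (ℤ → ℤ → ℝ) × (ℤ → ℤ → ℝ) × (ℤ → ℝ) × (ℤ → ℤ → ℤ → ℝ) × (ℤ → ℤ → ℤ → ℝ)

def wOf (x : Pt) : ℤ → ℝ := x.1
def yOf (x : Pt) : ℤ → ℤ → ℝ := x.2.1
def zOf (x : Pt) : ℤ → ℤ → ℝ := x.2.2.1
def thOf (x : Pt) : ℤ → ℝ := x.2.2.2.1
def qOf (x : Pt) : ℤ → ℤ → ℤ → ℝ := x.2.2.2.2.1
def phOf (x : Pt) : ℤ → ℤ → ℤ → ℝ := x.2.2.2.2.2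

/-- Membership in the EUC polyhedron `X_I`; coordinates outside the index sets
are fixed to `0` (the standard embedding of the polyhedron described on the
variables `w_t (t ∈ [t0,T])`, `y_{tk} ((t,k) ∈ TK²)`, `z_{kt} ((k,t) ∈ KT)`,
`θ_t (t ∈ [t0,T−1])`, `q_{tk}^s, φ_{tk}^s ((t,k) ∈ TK, s ∈ [t,k])`). -/
def memXI (T L l t0 : ℤ) (Cmin Cmax Vbar V : ℝ) (N : ℤ)
    (a b : ℤ → ℤ → ℝ) (x : Pt) : Prop :=
  (∑ t ∈ Finset.Icc t0 T, wOf x t) = 1 ∧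
  (∀ t ∈ Finset.Icc t0 (T - 1),
    -wOf x t + (∑ p ∈ (KT t0 T l).filter (fun p => p.1 = t), zOf x p.1 p.2)
      - (∑ p ∈ (TK2 t0 T L l).filter (fun p => p.2 = t), yOf x p.1 p.2)
      + thOf x t = 0) ∧
  (∀ t ∈ Finset.Icc (t0 + l + 1) T,
    (∑ p ∈ (TK2 t0 T L l).filter (fun p => p.1 = t), yOf x p.1 p.2)
      - (∑ p ∈ (KT t0 T l).filter (fun p => p.2 = t), zOf x p.1 p.2) = 0) ∧
  (∀ p ∈ TK1 t0 T, ∀ s ∈ Finset.Icc p.1 p.2,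
    Cmin * wOf x p.2 ≤ qOf x p.1 p.2 s ∧ qOf x p.1 p.2 s ≤ Cmax * wOf x p.2) ∧
  (∀ p ∈ TK2 t0 T L l, ∀ s ∈ Finset.Icc p.1 p.2,
    Cmin * yOf x p.1 p.2 ≤ qOf x p.1 p.2 s ∧ qOf x p.1 p.2 s ≤ Cmax * yOf x p.1 p.2) ∧
  (∀ p ∈ TK2 t0 T L l, qOf x p.1 p.2 p.1 ≤ Vbar * yOf x p.1 p.2) ∧
  (∀ p ∈ TK1 t0 T, p.2 ≤ T - 1 → qOf x p.1 p.2 p.2 ≤ Vbar * wOf x p.2) ∧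
  (∀ p ∈ TK2 t0 T L l, p.2 ≤ T - 1 → qOf x p.1 p.2 p.2 ≤ Vbar * yOf x p.1 p.2) ∧
  (∀ p ∈ TK1 t0 T, ∀ s ∈ Finset.Icc (p.1 + 1) p.2,
    |qOf x p.1 p.2 s - qOf x p.1 p.2 (s - 1)| ≤ V * wOf x p.2) ∧
  (∀ p ∈ TK2 t0 T L l, ∀ s ∈ Finset.Icc (p.1 + 1) p.2,
    |qOf x p.1 p.2 s - qOf x p.1 p.2 (s - 1)| ≤ V * yOf x p.1 p.2) ∧
  (∀ p ∈ TK1 t0 T, ∀ s ∈ Finset.Icc p.1 p.2, ∀ j ∈ Finset.Icc 1 N,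
    a j s * qOf x p.1 p.2 s + b j s * wOf x p.2 ≤ phOf x p.1 p.2 s) ∧
  (∀ p ∈ TK2 t0 T L l, ∀ s ∈ Finset.Icc p.1 p.2, ∀ j ∈ Finset.Icc 1 N,
    a j s * qOf x p.1 p.2 s + b j s * yOf x p.1 p.2 ≤ phOf x p.1 p.2 s) ∧
  (∀ t ∈ Finset.Icc t0 T, 0 ≤ wOf x t) ∧
  (∀ p ∈ TK2 t0 T L l, 0 ≤ yOf x p.1 p.2) ∧
  (∀ p ∈ KT t0 T l, 0 ≤ zOf x p.1 p.2) ∧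
  (∀ t ∈ Finset.Icc t0 (T - l - 1), 0 ≤ thOf x t) ∧
  (∀ t, t ∉ Finset.Icc t0 T → wOf x t = 0) ∧
  (∀ t k, (t, k) ∉ TK2 t0 T L l → yOf x t k = 0) ∧
  (∀ k t, (k, t) ∉ KT t0 T l → zOf x k t = 0) ∧
  (∀ t, t ∉ Finset.Icc t0 (T - 1) → thOf x t = 0) ∧
  (∀ t k s, ((t, k) ∉ TK t0 T L l ∨ s ∉ Finset.Icc t k) →
    qOf x t k s = 0 ∧ phOf x t k s = 0)

/-- A point of `X_I` is binary if all of its `w, y, z, θ` coordinates lie in `{0,1}`. -/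
def BinaryPt (T L l t0 : ℤ) (x : Pt) : Prop :=
  (∀ t ∈ Finset.Icc t0 T, wOf x t = 0 ∨ wOf x t = 1) ∧
  (∀ p ∈ TK2 t0 T L l, yOf x p.1 p.2 = 0 ∨ yOf x p.1 p.2 = 1) ∧
  (∀ p ∈ KT t0 T l, zOf x p.1 p.2 = 0 ∨ zOf x p.1 p.2 = 1) ∧
  (∀ t ∈ Finset.Icc t0 (T - 1), thOf x t = 0 ∨ thOf x t = 1)

/-- The EUC objective `G`. -/
noncomputable def Gobj (T L l t0 s0 : ℤ) (S S' : ℤ → ℝ) (x : Pt) : ℝ :=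
  (∑ t ∈ Finset.Icc t0 (T - 1), S' (t + s0) * wOf x t)
  + (∑ p ∈ (TK2 t0 T L l).filter (fun p => p.2 ≤ T - 1), S' (p.2 - p.1 + 1) * yOf x p.1 p.2)
  + (∑ p ∈ KT t0 T l, S (p.2 - p.1 - 1) * zOf x p.1 p.2)
  + (∑ p ∈ TK t0 T L l, ∑ s ∈ Finset.Icc p.1 p.2, phOf x p.1 p.2 s)

/-- Aggregate output `Q(x)_s = Σ_{(t,k)∈TK : t≤s≤k} q_{tk}^s`. -/
noncomputable def Qout (T L l t0 : ℤ) (x : Pt) (s : ℤ) : ℝ :=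
  ∑ p ∈ (TK t0 T L l).filter (fun p => p.1 ≤ s ∧ s ≤ p.2), qOf x p.1 p.2 s

/-- Inner product `⟨π, f⟩ = Σ_{s=1}^{T} π_s f_s` of vectors indexed by `[1,T]`. -/
noncomputable def priceInner (T : ℤ) (pr f : ℤ → ℝ) : ℝ := ∑ s ∈ Finset.Icc 1 T, pr s * f s

/-- `max_{1≤j≤N} (a_j^t·xx + b_j^t·uu)`, the piecewise-linear net cost. -/
noncomputable def fmax (N : ℤ) (hN : 1 ≤ N) (a b : ℤ → ℤ → ℝ) (t : ℤ) (uu xx : ℝ) : ℝ :=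
  (Finset.Icc 1 N).sup' (Finset.nonempty_Icc.mpr hN) (fun j => a j t * xx + b j t * uu)

/-- Feasibility for the 2-Bin unit-commitment MIP (binary requirements on `u, v`
included; the convention `u_0 := 1` is built in via `ue`). -/
def TwoBinFeas (T L l t0 s0 : ℤ) (Cmin Cmax Vbar V : ℝ) (S S' : ℤ → ℝ)
    (u v xg zt zt' : ℤ → ℝ) : Prop :=
  let ue : ℤ → ℝ := fun t => if t = 0 then 1 else u t
  (∀ t ∈ Finset.Icc (1 : ℤ) T, u t = 0 ∨ u t = 1) ∧
  (∀ t ∈ Finset.Icc (1 : ℤ) T, v t = 0 ∨ v t = 1) ∧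
  (∀ t ∈ Finset.Icc (t0 + l + 1) T, 0 ≤ zt t) ∧
  (∀ t ∈ Finset.Icc t0 (T - 1), 0 ≤ zt' t) ∧
  (∀ t ∈ Finset.Icc (1 : ℤ) t0, u t = 1) ∧
  (∀ t ∈ Finset.Icc (t0 + l + L) T, (∑ i ∈ Finset.Icc (t - L + 1) t, v i) ≤ u t) ∧
  (∀ t ∈ Finset.Icc (t0 + l) T, (∑ i ∈ Finset.Icc (t - l + 1) t, v i) ≤ 1 - ue (t - l)) ∧
  (∀ t ∈ Finset.Icc (1 : ℤ) T, u t - ue (t - 1) - v t ≤ 0) ∧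
  (∀ t ∈ Finset.Icc (1 : ℤ) T, Cmin * u t ≤ xg t ∧ xg t ≤ Cmax * u t) ∧
  (∀ t ∈ Finset.Icc (2 : ℤ) T, xg t - xg (t - 1) ≤ V * u (t - 1) + Vbar * (1 - u (t - 1))) ∧
  (∀ t ∈ Finset.Icc (2 : ℤ) T, xg (t - 1) - xg t ≤ V * u t + Vbar * (1 - u t)) ∧
  (∀ t ∈ Finset.Icc t0 (T - 1),
    S' (t + s0) * (1 - u (t + 1) - ∑ s ∈ Finset.Icc 1 t, (1 - u s)) ≤ zt' t) ∧
  (∀ t ∈ Finset.Icc (t0 + l + L) (T - 1), ∀ k ∈ Finset.Icc (t0 + l + 1) (t - L + 1),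
    S' (t - k + 1) * (v k - ∑ s ∈ Finset.Icc k t, (1 - u s)) ≤ zt' t) ∧
  (∀ t ∈ Finset.Icc (t0 + l + 1) T, ∀ k ∈ Finset.Icc t0 (t - l - 1),
    S (t - k - 1) * (v t - ∑ s ∈ Finset.Icc (k + 1) (t - 1), u s) ≤ zt t)

/-- Objective of the 2-Bin unit-commitment MIP. -/
noncomputable def TwoBinObj (T l t0 : ℤ) (N : ℤ) (hN : 1 ≤ N) (a b : ℤ → ℤ → ℝ)
    (u xg zt zt' : ℤ → ℝ) : ℝ :=
  (∑ t ∈ Finset.Icc (1 : ℤ) T, fmax N hN a b t (u t) (xg t))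
  + (∑ t ∈ Finset.Icc (t0 + l + 1) T, zt t)
  + (∑ t ∈ Finset.Icc t0 (T - 1), zt' t)

/-- Feasibility for the economic-dispatch problem on the on-interval `[t,k]`. -/
def EDfeas (T : ℤ) (Cmin Cmax Vbar V : ℝ) (t k : ℤ) (xg : ℤ → ℝ) : Prop :=
  (∀ s ∈ Finset.Icc t k, Cmin ≤ xg s ∧ xg s ≤ Cmax) ∧
  (2 ≤ t → xg t ≤ Vbar) ∧
  (k ≤ T - 1 → xg k ≤ Vbar) ∧
  (∀ s ∈ Finset.Icc (t + 1) k, |xg s - xg (s - 1)| ≤ V)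

/-- The economic-dispatch value `C(t,k)`. -/
noncomputable def Cval (T : ℤ) (Cmin Cmax Vbar V : ℝ) (N : ℤ) (hN : 1 ≤ N) (a b : ℤ → ℤ → ℝ)
    (t k : ℤ) : ℝ :=
  sInf {r : ℝ | ∃ xg : ℤ → ℝ, EDfeas T Cmin Cmax Vbar V t k xg ∧
    r = ∑ s ∈ Finset.Icc t k, fmax N hN a b s 1 (xg s)}

/-- Commitment status recovered from an EUC point:
`u_s = Σ_{(1,k)∈TK¹ : k≥s} w_k + Σ_{(t,k)∈TK² : t≤s≤k} y_{tk}`. -/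
noncomputable def usol (T L l t0 : ℤ) (x : Pt) (s : ℤ) : ℝ :=
  (∑ p ∈ (TK1 t0 T).filter (fun p => s ≤ p.2), wOf x p.2)
  + (∑ p ∈ (TK2 t0 T L l).filter (fun p => p.1 ≤ s ∧ s ≤ p.2), yOf x p.1 p.2)

/-- Start-up status recovered from an EUC point: `v_s = Σ_{(k,t)∈KT : t=s} z_{kt}`. -/
noncomputable def vsol (T l t0 : ℤ) (x : Pt) (s : ℤ) : ℝ :=
  ∑ p ∈ (KT t0 T l).filter (fun p => p.2 = s), zOf x p.1 p.2


lemma mem_TK1 {t0 T t k : ℤ} : (t, k) ∈ TK1 t0 T ↔ t = 1 ∧ k ∈ Finset.Icc (max t0 1) T := by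
  simp only [TK1, Finset.mem_image, Prod.mk.injEq]
  constructor
  · rintro ⟨k', hk', h1, h2⟩; exact ⟨h1.symm, h2 ▸ hk'⟩
  · rintro ⟨h1, h2⟩; exact ⟨k, h2, h1.symm, rfl⟩

lemma mem_TK2 {t0 T L l t k : ℤ} :
    (t, k) ∈ TK2 t0 T L l ↔ t ∈ Finset.Icc (t0 + l + 1) T ∧ k ∈ Finset.Icc (min (t + L - 1) T) T := by
  simp only [TK2, Finset.mem_biUnion, Finset.mem_image, Prod.mk.injEq]
  constructor
  · rintro ⟨t', ht', k', hk', h1, h2⟩; subst h1; subst h2; exact ⟨ht', hk'⟩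
  · rintro ⟨h1, h2⟩; exact ⟨t, h1, k, h2, rfl, rfl⟩

lemma mem_KT {t0 T l k t : ℤ} :
    (k, t) ∈ KT t0 T l ↔ k ∈ Finset.Icc t0 (T - l - 1) ∧ t ∈ Finset.Icc (k + l + 1) T := by
  simp only [KT, Finset.mem_biUnion, Finset.mem_image, Prod.mk.injEq]
  constructor
  · rintro ⟨k', hk', t', ht', h1, h2⟩; subst h1; subst h2; exact ⟨hk', ht'⟩
  · rintro ⟨h1, h2⟩; exact ⟨k, h1, t, h2, rfl, rfl⟩

lemma fmax_le {N : ℤ} (hN : 1 ≤ N) {a b : ℤ → ℤ → ℝ} {t : ℤ} {uu xx r : ℝ}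
    (h : ∀ j ∈ Finset.Icc 1 N, a j t * xx + b j t * uu ≤ r) : fmax N hN a b t uu xx ≤ r := by
  unfold fmax; exact Finset.sup'_le _ (fun j => a j t * xx + b j t * uu) h

lemma le_fmax {N : ℤ} (hN : 1 ≤ N) {a b : ℤ → ℤ → ℝ} {t : ℤ} {uu xx : ℝ} {j : ℤ}
    (hj : j ∈ Finset.Icc 1 N) : a j t * xx + b j t * uu ≤ fmax N hN a b t uu xx :=
  by unfold fmax; exact Finset.le_sup' (fun j => a j t * xx + b j t * uu) hj

/-- Attainment of the economic dispatch minimum. -/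
lemma ED_exists (T : ℤ) (Cmin Cmax Vbar V : ℝ) (N : ℤ) (hN : 1 ≤ N) (a b : ℤ → ℤ → ℝ)
    (hCC : Cmin ≤ Cmax) (hVbar : Cmin ≤ Vbar) (hV : 0 ≤ V) (t k : ℤ) :
    ∃ xg : ℤ → ℝ, EDfeas T Cmin Cmax Vbar V t k xg ∧
      (∑ s ∈ Finset.Icc t k, fmax N hN a b s 1 (xg s)) = Cval T Cmin Cmax Vbar V N hN a b t k ∧
      ∀ yg : ℤ → ℝ, EDfeas T Cmin Cmax Vbar V t k yg →
        Cval T Cmin Cmax Vbar V N hN a b t k ≤ ∑ s ∈ Finset.Icc t k, fmax N hN a b s 1 (yg s) := by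
  classical
  set F : (ℤ → ℝ) → ℝ := fun xg => ∑ s ∈ Finset.Icc t k, fmax N hN a b s 1 (xg s) with hF
  set K : Set (ℤ → ℝ) := {xg | (∀ s, xg s ∈ (if s ∈ Finset.Icc t k then Set.Icc Cmin Cmax else ({Cmin} : Set ℝ))) ∧
      (2 ≤ t → xg t ≤ Vbar) ∧ (k ≤ T - 1 → xg k ≤ Vbar) ∧
      ∀ s ∈ Finset.Icc (t + 1) k, |xg s - xg (s - 1)| ≤ V} with hK
  have hKsub : K ⊆ Set.pi Set.univ
      (fun s => if s ∈ Finset.Icc t k then Set.Icc Cmin Cmax else ({Cmin} : Set ℝ)) := by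
    intro xg hxg s _; exact hxg.1 s
  have hBcomp : IsCompact (Set.pi Set.univ
      (fun s : ℤ => if s ∈ Finset.Icc t k then Set.Icc Cmin Cmax else ({Cmin} : Set ℝ))) := by
    apply isCompact_univ_pi
    intro s; split
    · exact isCompact_Icc
    · exact isCompact_singleton
  have hKclosed : IsClosed K := by
    have h1 : IsClosed {xg : ℤ → ℝ | ∀ s, xg s ∈ (if s ∈ Finset.Icc t k then Set.Icc Cmin Cmax else ({Cmin} : Set ℝ))} := by
      have : {xg : ℤ → ℝ | ∀ s, xg s ∈ (if s ∈ Finset.Icc t k then Set.Icc Cmin Cmax else ({Cmin} : Set ℝ))}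
          = Set.pi Set.univ (fun s => if s ∈ Finset.Icc t k then Set.Icc Cmin Cmax else ({Cmin} : Set ℝ)) := by
        ext xg; simp [Set.mem_pi]
      rw [this]
      apply isClosed_set_pi
      intro s _; split
      · exact isClosed_Icc
      · exact isClosed_singleton
    have h2 : IsClosed {xg : ℤ → ℝ | 2 ≤ t → xg t ≤ Vbar} := by
      by_cases h : (2 : ℤ) ≤ t
      · simp only [h, forall_true_left]
        exact isClosed_le (continuous_apply t) continuous_const
      · simp only [h, IsEmpty.forall_iff]  -- might fail; fallback below
        exact isClosed_univ
    have h3 : IsClosed {xg : ℤ → ℝ | k ≤ T - 1 → xg k ≤ Vbar} := by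
      by_cases h : k ≤ T - 1
      · simp only [h, forall_true_left]
        exact isClosed_le (continuous_apply k) continuous_const
      · simp only [h, IsEmpty.forall_iff]
        exact isClosed_univ
    have h4 : IsClosed {xg : ℤ → ℝ | ∀ s ∈ Finset.Icc (t + 1) k, |xg s - xg (s - 1)| ≤ V} := by
      have : {xg : ℤ → ℝ | ∀ s ∈ Finset.Icc (t + 1) k, |xg s - xg (s - 1)| ≤ V}
          = ⋂ s ∈ (Finset.Icc (t + 1) k : Set ℤ), {xg : ℤ → ℝ | |xg s - xg (s - 1)| ≤ V} := by
        ext xg; simp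
      rw [this]
      apply isClosed_biInter
      intro s _
      exact isClosed_le ((continuous_apply s).sub (continuous_apply (s - 1))).abs continuous_const
    exact (h1.inter (h2.inter (h3.inter h4)))
  have hKcomp : IsCompact K := hBcomp.of_isClosed_subset hKclosed hKsub
  have hKne : K.Nonempty := by
    refine ⟨fun _ => Cmin, ?_, fun _ => hVbar, fun _ => hVbar, fun s _ => by simp [hV]⟩
    intro s; split
    · exact ⟨le_rfl, hCC⟩
    · rfl
  have hFcont : Continuous F := by
    apply continuous_finset_sum
    intro s _
    have : (fun xg : ℤ → ℝ => fmax N hN a b s 1 (xg s))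
        = fun xg : ℤ → ℝ => (Finset.Icc 1 N).sup' (Finset.nonempty_Icc.mpr hN)
            (fun j => (fun g : ℤ → ℝ => a j s * g s + b j s * 1) xg) := rfl
    rw [this]
    exact Continuous.finset_sup'_apply _ fun j _ =>
      ((continuous_const.mul (continuous_apply s)).add continuous_const)
  obtain ⟨xg, hxgK, hmin⟩ := hKcomp.exists_isMinOn hKne hFcont.continuousOn
  have hfeas : EDfeas T Cmin Cmax Vbar V t k xg := by
    refine ⟨?_, hxgK.2.1, hxgK.2.2.1, hxgK.2.2.2⟩
    intro s hs
    have := hxgK.1 s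
    rw [if_pos hs] at this
    exact this
  have hle : ∀ yg : ℤ → ℝ, EDfeas T Cmin Cmax Vbar V t k yg → F xg ≤ F yg := by
    intro yg hyg
    set yg' : ℤ → ℝ := fun s => if s ∈ Finset.Icc t k then yg s else Cmin with hyg'
    have hmem : yg' ∈ K := by
      refine ⟨?_, ?_, ?_, ?_⟩
      · intro s
        by_cases hs : s ∈ Finset.Icc t k
        · simp only [hyg', if_pos hs]
          exact hyg.1 s hs
        · simp only [hyg', if_neg hs]
          rfl
      · intro ht2
        by_cases hs : t ∈ Finset.Icc t k
        · simp only [hyg', if_pos hs]; exact hyg.2.1 ht2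
        · simp only [hyg', if_neg hs]; exact hVbar
      · intro hk2
        by_cases hs : k ∈ Finset.Icc t k
        · simp only [hyg', if_pos hs]; exact hyg.2.2.1 hk2
        · simp only [hyg', if_neg hs]; exact hVbar
      · intro s hs
        rw [Finset.mem_Icc] at hs
        have hs1 : s ∈ Finset.Icc t k := Finset.mem_Icc.mpr ⟨by omega, hs.2⟩
        have hs2 : s - 1 ∈ Finset.Icc t k := Finset.mem_Icc.mpr ⟨by omega, by omega⟩
        simp only [hyg', if_pos hs1, if_pos hs2]
        exact hyg.2.2.2 s (Finset.mem_Icc.mpr hs)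
    have hFeq : F yg' = F yg := by
      apply Finset.sum_congr rfl
      intro s hs
      simp only [hyg', if_pos hs]
    calc F xg ≤ F yg' := hmin hmem
    _ = F yg := hFeq
  have hmemS : F xg ∈ {r : ℝ | ∃ g : ℤ → ℝ, EDfeas T Cmin Cmax Vbar V t k g ∧
      r = ∑ s ∈ Finset.Icc t k, fmax N hN a b s 1 (g s)} := ⟨xg, hfeas, rfl⟩
  have hlb : ∀ r ∈ {r : ℝ | ∃ g : ℤ → ℝ, EDfeas T Cmin Cmax Vbar V t k g ∧
      r = ∑ s ∈ Finset.Icc t k, fmax N hN a b s 1 (g s)}, F xg ≤ r := by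
    rintro r ⟨g, hg, rfl⟩
    exact hle g hg
  have hCval : Cval T Cmin Cmax Vbar V N hN a b t k = F xg := by
    unfold Cval
    exact le_antisymm (csInf_le ⟨F xg, hlb⟩ hmemS) (le_csInf ⟨F xg, hmemS⟩ hlb)
  exact ⟨xg, hfeas, hCval.symm, fun yg hyg => hCval ▸ hle yg hyg⟩

@[simp] lemma wOf_add (P Q : Pt) (t : ℤ) : wOf (P + Q) t = wOf P t + wOf Q t := rfl
@[simp] lemma yOf_add (P Q : Pt) (t k : ℤ) : yOf (P + Q) t k = yOf P t k + yOf Q t k := rfl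
@[simp] lemma zOf_add (P Q : Pt) (t k : ℤ) : zOf (P + Q) t k = zOf P t k + zOf Q t k := rfl
@[simp] lemma thOf_add (P Q : Pt) (t : ℤ) : thOf (P + Q) t = thOf P t + thOf Q t := rfl
@[simp] lemma qOf_add (P Q : Pt) (t k s : ℤ) : qOf (P + Q) t k s = qOf P t k s + qOf Q t k s := rfl
@[simp] lemma phOf_add (P Q : Pt) (t k s : ℤ) : phOf (P + Q) t k s = phOf P t k s + phOf Q t k s := rfl

def zPt (k t : ℤ) : Pt :=
  (0, fun _ _ => 0, fun k' t' => if (k', t') = (k, t) then 1 else 0, 0, fun _ _ _ => 0, fun _ _ _ => 0)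

def thPt (t : ℤ) : Pt :=
  (0, fun _ _ => 0, fun _ _ => 0, fun t' => if t' = t then 1 else 0, fun _ _ _ => 0, fun _ _ _ => 0)

noncomputable def yPt (t k : ℤ) (g gp : ℤ → ℝ) : Pt :=
  (0, fun t' k' => if (t', k') = (t, k) then 1 else 0, fun _ _ => 0, 0,
   fun t' k' s => if (t', k') = (t, k) ∧ s ∈ Finset.Icc t k then g s else 0,
   fun t' k' s => if (t', k') = (t, k) ∧ s ∈ Finset.Icc t k then gp s else 0)

noncomputable def wPt (t : ℤ) (g gp : ℤ → ℝ) : Pt :=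
  (fun t' => if t' = t then 1 else 0, fun _ _ => 0, fun _ _ => 0, 0,
   fun t' k' s => if (t', k') = ((1 : ℤ), t) ∧ s ∈ Finset.Icc 1 t then g s else 0,
   fun t' k' s => if (t', k') = ((1 : ℤ), t) ∧ s ∈ Finset.Icc 1 t then gp s else 0)

lemma sum_ite_pair (F : Finset (ℤ × ℤ)) (f : ℤ × ℤ → ℝ) (c : ℤ × ℤ) :
    (∑ p ∈ F, (if (p.1, p.2) = c then f p else 0)) = if c ∈ F then f c else 0 := by
  simp_rw [Prod.mk.eta]
  exact Finset.sum_ite_eq' F c f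

lemma sum_ite_pair_filter (F : Finset (ℤ × ℤ)) (pred : ℤ × ℤ → Prop) [DecidablePred pred]
    (f : ℤ × ℤ → ℝ) (c : ℤ × ℤ) :
    (∑ p ∈ F.filter pred, (if (p.1, p.2) = c then f p else 0))
      = if c ∈ F ∧ pred c then f c else 0 := by
  rw [sum_ite_pair]
  simp [Finset.mem_filter]

lemma sum_phi_single (F : Finset (ℤ × ℤ)) (c : ℤ × ℤ) (g : ℤ → ℝ) :
    (∑ p ∈ F, ∑ s ∈ Finset.Icc p.1 p.2, (if (p.1, p.2) = c ∧ s ∈ Finset.Icc c.1 c.2 then g s else 0))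
      = if c ∈ F then (∑ s ∈ Finset.Icc c.1 c.2, g s) else 0 := by
  have h : ∀ p : ℤ × ℤ,
      (∑ s ∈ Finset.Icc p.1 p.2, (if (p.1, p.2) = c ∧ s ∈ Finset.Icc c.1 c.2 then g s else 0))
        = (if (p.1, p.2) = c then (∑ s ∈ Finset.Icc c.1 c.2, g s) else 0) := by
    intro p
    by_cases hp : (p.1, p.2) = c
    · rw [if_pos hp]
      have h1 : p.1 = c.1 := by rw [← hp]
      have h2 : p.2 = c.2 := by rw [← hp]
      rw [h1, h2]
      refine Finset.sum_congr rfl fun s hs => ?_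
      rw [if_pos ⟨Prod.mk.eta, hs⟩]
    · rw [if_neg hp]
      exact Finset.sum_eq_zero fun s _ => by rw [if_neg (by tauto)]
  simp_rw [h]
  exact sum_ite_pair F _ c

/-- Invariant for a partial EUC point representing a unit of flow entering the
"down" node `t` and routed to the sink, of total cost `c`. -/
structure Good (T L l t0 : ℤ) (Cmin Cmax Vbar V : ℝ) (N : ℤ) (a b : ℤ → ℤ → ℝ)
    (S S' : ℤ → ℝ) (t : ℤ) (c : ℝ) (P : Pt) : Prop where
  hw : ∀ s, wOf P s = 0
  hybin : ∀ t' k', yOf P t' k' = 0 ∨ yOf P t' k' = 1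
  hysupp : ∀ t' k', yOf P t' k' ≠ 0 → (t', k') ∈ TK2 t0 T L l ∧ t + l + 1 ≤ t'
  hzbin : ∀ k' t', zOf P k' t' = 0 ∨ zOf P k' t' = 1
  hzsupp : ∀ k' t', zOf P k' t' ≠ 0 → (k', t') ∈ KT t0 T l ∧ t ≤ k'
  hthbin : ∀ s, thOf P s = 0 ∨ thOf P s = 1
  hthsupp : ∀ s, thOf P s ≠ 0 → t ≤ s ∧ t0 ≤ s ∧ s ≤ T - 1
  flowD : ∀ s ∈ Finset.Icc t0 (T - 1),
    (∑ p ∈ (KT t0 T l).filter (fun p => p.1 = s), zOf P p.1 p.2)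
      - (∑ p ∈ (TK2 t0 T L l).filter (fun p => p.2 = s), yOf P p.1 p.2)
      + thOf P s = (if s = t then 1 else 0)
  flowU : ∀ s ∈ Finset.Icc (t0 + l + 1) T,
    (∑ p ∈ (TK2 t0 T L l).filter (fun p => p.1 = s), yOf P p.1 p.2)
      - (∑ p ∈ (KT t0 T l).filter (fun p => p.2 = s), zOf P p.1 p.2) = 0
  hqsupp : ∀ tt kk ss, ¬((tt, kk) ∈ TK2 t0 T L l ∧ ss ∈ Finset.Icc tt kk) →
    qOf P tt kk ss = 0 ∧ phOf P tt kk ss = 0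
  hqy : ∀ tt kk ss, yOf P tt kk = 0 → qOf P tt kk ss = 0 ∧ phOf P tt kk ss = 0
  hq1 : ∀ p ∈ TK2 t0 T L l, ∀ s ∈ Finset.Icc p.1 p.2,
    Cmin * yOf P p.1 p.2 ≤ qOf P p.1 p.2 s ∧ qOf P p.1 p.2 s ≤ Cmax * yOf P p.1 p.2
  hq2 : ∀ p ∈ TK2 t0 T L l, qOf P p.1 p.2 p.1 ≤ Vbar * yOf P p.1 p.2
  hq3 : ∀ p ∈ TK2 t0 T L l, p.2 ≤ T - 1 → qOf P p.1 p.2 p.2 ≤ Vbar * yOf P p.1 p.2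
  hq4 : ∀ p ∈ TK2 t0 T L l, ∀ s ∈ Finset.Icc (p.1 + 1) p.2,
    |qOf P p.1 p.2 s - qOf P p.1 p.2 (s - 1)| ≤ V * yOf P p.1 p.2
  hq5 : ∀ p ∈ TK2 t0 T L l, ∀ s ∈ Finset.Icc p.1 p.2, ∀ j ∈ Finset.Icc 1 N,
    a j s * qOf P p.1 p.2 s + b j s * yOf P p.1 p.2 ≤ phOf P p.1 p.2 s
  cost : (∑ p ∈ (TK2 t0 T L l).filter (fun p => p.2 ≤ T - 1), S' (p.2 - p.1 + 1) * yOf P p.1 p.2)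
    + (∑ p ∈ KT t0 T l, S (p.2 - p.1 - 1) * zOf P p.1 p.2)
    + (∑ p ∈ TK2 t0 T L l, ∑ s ∈ Finset.Icc p.1 p.2, phOf P p.1 p.2 s) = c

section Constructions

variable {T L l t0 : ℤ} {Cmin Cmax Vbar V : ℝ} {N : ℤ} {a b : ℤ → ℤ → ℝ} {S S' : ℤ → ℝ}

@[simp] lemma wOf_thPt (t s : ℤ) : wOf (thPt t) s = 0 := rfl
@[simp] lemma yOf_thPt (t t' k' : ℤ) : yOf (thPt t) t' k' = 0 := rfl
@[simp] lemma zOf_thPt (t k' t' : ℤ) : zOf (thPt t) k' t' = 0 := rfl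
@[simp] lemma thOf_thPt (t s : ℤ) : thOf (thPt t) s = if s = t then 1 else 0 := rfl
@[simp] lemma qOf_thPt (t t' k' s : ℤ) : qOf (thPt t) t' k' s = 0 := rfl
@[simp] lemma phOf_thPt (t t' k' s : ℤ) : phOf (thPt t) t' k' s = 0 := rfl

@[simp] lemma wOf_zPt (k t s : ℤ) : wOf (zPt k t) s = 0 := rfl
@[simp] lemma yOf_zPt (k t t' k' : ℤ) : yOf (zPt k t) t' k' = 0 := rfl
@[simp] lemma zOf_zPt (k t k' t' : ℤ) : zOf (zPt k t) k' t' = if (k', t') = (k, t) then 1 else 0 := rfl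
@[simp] lemma thOf_zPt (k t s : ℤ) : thOf (zPt k t) s = 0 := rfl
@[simp] lemma qOf_zPt (k t t' k' s : ℤ) : qOf (zPt k t) t' k' s = 0 := rfl
@[simp] lemma phOf_zPt (k t t' k' s : ℤ) : phOf (zPt k t) t' k' s = 0 := rfl

@[simp] lemma wOf_yPt (t k : ℤ) (g gp : ℤ → ℝ) (s : ℤ) : wOf (yPt t k g gp) s = 0 := rfl
@[simp] lemma yOf_yPt (t k : ℤ) (g gp : ℤ → ℝ) (t' k' : ℤ) :
    yOf (yPt t k g gp) t' k' = if (t', k') = (t, k) then 1 else 0 := rfl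
@[simp] lemma zOf_yPt (t k : ℤ) (g gp : ℤ → ℝ) (k' t' : ℤ) : zOf (yPt t k g gp) k' t' = 0 := rfl
@[simp] lemma thOf_yPt (t k : ℤ) (g gp : ℤ → ℝ) (s : ℤ) : thOf (yPt t k g gp) s = 0 := rfl
@[simp] lemma qOf_yPt (t k : ℤ) (g gp : ℤ → ℝ) (t' k' s : ℤ) :
    qOf (yPt t k g gp) t' k' s = if (t', k') = (t, k) ∧ s ∈ Finset.Icc t k then g s else 0 := rfl
@[simp] lemma phOf_yPt (t k : ℤ) (g gp : ℤ → ℝ) (t' k' s : ℤ) :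
    phOf (yPt t k g gp) t' k' s = if (t', k') = (t, k) ∧ s ∈ Finset.Icc t k then gp s else 0 := rfl

@[simp] lemma wOf_wPt (t : ℤ) (g gp : ℤ → ℝ) (s : ℤ) : wOf (wPt t g gp) s = if s = t then 1 else 0 := rfl
@[simp] lemma yOf_wPt (t : ℤ) (g gp : ℤ → ℝ) (t' k' : ℤ) : yOf (wPt t g gp) t' k' = 0 := rfl
@[simp] lemma zOf_wPt (t : ℤ) (g gp : ℤ → ℝ) (k' t' : ℤ) : zOf (wPt t g gp) k' t' = 0 := rfl
@[simp] lemma thOf_wPt (t : ℤ) (g gp : ℤ → ℝ) (s : ℤ) : thOf (wPt t g gp) s = 0 := rfl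
@[simp] lemma qOf_wPt (t : ℤ) (g gp : ℤ → ℝ) (t' k' s : ℤ) :
    qOf (wPt t g gp) t' k' s = if (t', k') = ((1 : ℤ), t) ∧ s ∈ Finset.Icc 1 t then g s else 0 := rfl
@[simp] lemma phOf_wPt (t : ℤ) (g gp : ℤ → ℝ) (t' k' s : ℤ) :
    phOf (wPt t g gp) t' k' s = if (t', k') = ((1 : ℤ), t) ∧ s ∈ Finset.Icc 1 t then gp s else 0 := rfl

lemma good_stop {t : ℤ} (ht : t ∈ Finset.Icc t0 (T - 1)) :
    Good T L l t0 Cmin Cmax Vbar V N a b S S' t 0 (thPt t) := by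
  rw [Finset.mem_Icc] at ht
  refine ⟨fun s => rfl, fun t' k' => Or.inl rfl, fun t' k' h => absurd rfl h,
    fun k' t' => Or.inl rfl, fun k' t' h => absurd rfl h,
    fun s => by by_cases h : s = t <;> simp [h],
    fun s h => ?_, fun s hs => by simp, fun s hs => by simp,
    fun tt kk ss _ => ⟨rfl, rfl⟩, fun tt kk ss _ => ⟨rfl, rfl⟩,
    fun p hp s hs => by simp, fun p hp => by simp, fun p hp _ => by simp,
    fun p hp s hs => by simp, fun p hp s hs j hj => by simp, by simp⟩
  by_cases hst : s = t
  · exact ⟨le_of_eq hst.symm, hst ▸ ht.1, hst ▸ ht.2⟩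
  · simp [hst] at h

lemma good_goEnd (hT : 2 ≤ T) (hL : 1 ≤ L) (hl : 1 ≤ l) (ht0 : 0 ≤ t0) (hN : 1 ≤ N)
    {t kk : ℤ} (ht : t ∈ Finset.Icc t0 (T - l - 1)) (hkk : kk ∈ Finset.Icc (t + l + 1) T)
    {g : ℤ → ℝ} (hg : EDfeas T Cmin Cmax Vbar V kk T g) :
    Good T L l t0 Cmin Cmax Vbar V N a b S S' t
      (S (kk - t - 1) + (∑ s ∈ Finset.Icc kk T, fmax N hN a b s 1 (g s)))
      (zPt t kk + yPt kk T g (fun s => fmax N hN a b s 1 (g s))) := by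
  rw [Finset.mem_Icc] at ht hkk
  have hmemKT : (t, kk) ∈ KT t0 T l := by
    rw [mem_KT, Finset.mem_Icc, Finset.mem_Icc]; omega
  have hmemTK2 : (kk, T) ∈ TK2 t0 T L l := by
    rw [mem_TK2, Finset.mem_Icc, Finset.mem_Icc]; omega
  refine ⟨fun s => by simp, ?_, ?_, ?_, ?_, fun s => by simp, fun s h => by simp at h,
    ?_, ?_, ?_, ?_, ?_, ?_, ?_, ?_, ?_, ?_⟩
  · intro t' k'
    by_cases h : (t', k') = (kk, T) <;> simp [h]
  · intro t' k' h
    simp only [yOf_add, yOf_zPt, yOf_yPt, zero_add] at h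
    by_cases heq : (t', k') = (kk, T)
    · rw [Prod.mk.injEq] at heq
      refine ⟨by rw [heq.1, heq.2]; exact hmemTK2, by omega⟩
    · simp [heq] at h
  · intro k' t'
    by_cases h : (k', t') = (t, kk) <;> simp [h]
  · intro k' t' h
    simp only [zOf_add, zOf_zPt, zOf_yPt, add_zero] at h
    by_cases heq : (k', t') = (t, kk)
    · rw [Prod.mk.injEq] at heq
      refine ⟨by rw [heq.1, heq.2]; exact hmemKT, by omega⟩
    · simp [heq] at h
  · -- flowD
    intro s hs
    rw [Finset.mem_Icc] at hs
    simp only [zOf_add, zOf_zPt, zOf_yPt, yOf_add, yOf_zPt, yOf_yPt, thOf_add, thOf_zPt,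
      thOf_yPt, add_zero, zero_add, Finset.sum_add_distrib]
    rw [sum_ite_pair_filter _ _ (fun _ => (1:ℝ)) (t, kk),
      sum_ite_pair_filter _ _ (fun _ => (1:ℝ)) (kk, T)]
    have hB : ¬((kk, T) ∈ TK2 t0 T L l ∧ ((kk, T) : ℤ × ℤ).2 = s) := by
      rintro ⟨_, h⟩
      simp only at h
      omega
    rw [if_neg hB]
    by_cases hst : s = t
    · have hA : ((t, kk) ∈ KT t0 T l ∧ ((t, kk) : ℤ × ℤ).1 = s) := ⟨hmemKT, hst.symm⟩
      rw [if_pos hA, if_pos hst]; ring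
    · have hA : ¬((t, kk) ∈ KT t0 T l ∧ ((t, kk) : ℤ × ℤ).1 = s) := by
        rintro ⟨_, h⟩; exact hst h.symm
      rw [if_neg hA, if_neg hst]; ring
  · -- flowU
    intro s hs
    simp only [zOf_add, zOf_zPt, zOf_yPt, yOf_add, yOf_zPt, yOf_yPt, add_zero, zero_add,
      Finset.sum_add_distrib]
    rw [sum_ite_pair_filter _ _ (fun _ => (1:ℝ)) (kk, T),
      sum_ite_pair_filter _ _ (fun _ => (1:ℝ)) (t, kk)]
    by_cases h : kk = s
    · have hA : ((kk, T) ∈ TK2 t0 T L l ∧ ((kk, T) : ℤ × ℤ).1 = s) := ⟨hmemTK2, h⟩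
      have hB : ((t, kk) ∈ KT t0 T l ∧ ((t, kk) : ℤ × ℤ).2 = s) := ⟨hmemKT, h⟩
      rw [if_pos hA, if_pos hB]; ring
    · have hA : ¬((kk, T) ∈ TK2 t0 T L l ∧ ((kk, T) : ℤ × ℤ).1 = s) := fun hc => h hc.2
      have hB : ¬((t, kk) ∈ KT t0 T l ∧ ((t, kk) : ℤ × ℤ).2 = s) := fun hc => h hc.2
      rw [if_neg hA, if_neg hB]; ring
  · -- hqsupp
    intro tt kk' ss h
    simp only [qOf_add, qOf_zPt, qOf_yPt, phOf_add, phOf_zPt, phOf_yPt, zero_add]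
    constructor <;>
    · rw [if_neg]
      rintro ⟨heq, hss⟩
      rw [Prod.mk.injEq] at heq
      exact h ⟨by rw [heq.1, heq.2]; exact hmemTK2, by rw [heq.1, heq.2]; exact hss⟩
  · -- hqy
    intro tt kk' ss h
    simp only [yOf_add, yOf_zPt, yOf_yPt, zero_add] at h
    simp only [qOf_add, qOf_zPt, qOf_yPt, phOf_add, phOf_zPt, phOf_yPt, zero_add]
    by_cases heq : (tt, kk') = (kk, T)
    · rw [if_pos heq] at h; norm_num at h
    · have hA : ¬((tt, kk') = (kk, T) ∧ ss ∈ Finset.Icc kk T) := fun hc => heq hc.1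
      rw [if_neg hA, if_neg hA]
      exact ⟨rfl, rfl⟩
  · -- hq1
    rintro ⟨p1, p2⟩ hp s hs
    have hs' : s ∈ Finset.Icc p1 p2 := hs
    simp only [qOf_add, qOf_zPt, qOf_yPt, yOf_add, yOf_zPt, yOf_yPt, zero_add, Prod.mk.injEq]
    by_cases hA : p1 = kk ∧ p2 = T
    · obtain ⟨h1, h2⟩ := hA
      subst h1; subst h2
      simp only [eq_self_iff_true, and_self, true_and, if_true, hs', if_true]
      have h2 := hg.1 s hs'
      constructor <;> linarith [h2.1, h2.2]
    · have hA1 : ¬((p1 = kk ∧ p2 = T) ∧ s ∈ Finset.Icc kk T) := fun hc => hA hc.1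
      rw [if_neg hA1, if_neg hA]
      simp
  · -- hq2
    rintro ⟨p1, p2⟩ hp
    have hp12 : p1 ≤ p2 := by
      rw [mem_TK2, Finset.mem_Icc, Finset.mem_Icc] at hp; omega
    simp only [qOf_add, qOf_zPt, qOf_yPt, yOf_add, yOf_zPt, yOf_yPt, zero_add, Prod.mk.injEq]
    by_cases hA : p1 = kk ∧ p2 = T
    · obtain ⟨h1, h2⟩ := hA
      subst h1; subst h2
      have hm : p1 ∈ Finset.Icc p1 p2 := by rw [Finset.mem_Icc]; omega
      simp only [eq_self_iff_true, and_self, true_and, if_true, hm]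
      have := hg.2.1 (by omega)
      linarith
    · have hA1 : ¬((p1 = kk ∧ p2 = T) ∧ p1 ∈ Finset.Icc kk T) := fun hc => hA hc.1
      rw [if_neg hA1, if_neg hA]
      simp
  · -- hq3
    rintro ⟨p1, p2⟩ hp hpT
    simp only at hpT
    simp only [qOf_add, qOf_zPt, qOf_yPt, yOf_add, yOf_zPt, yOf_yPt, zero_add, Prod.mk.injEq]
    by_cases hA : p1 = kk ∧ p2 = T
    · omega
    · have hA1 : ¬((p1 = kk ∧ p2 = T) ∧ p2 ∈ Finset.Icc kk T) := fun hc => hA hc.1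
      rw [if_neg hA1, if_neg hA]
      simp
  · -- hq4
    rintro ⟨p1, p2⟩ hp s hs
    have hs' : s ∈ Finset.Icc (p1 + 1) p2 := hs
    rw [Finset.mem_Icc] at hs'
    simp only [qOf_add, qOf_zPt, qOf_yPt, yOf_add, yOf_zPt, yOf_yPt, zero_add, Prod.mk.injEq]
    by_cases hA : p1 = kk ∧ p2 = T
    · obtain ⟨h1, h2⟩ := hA
      subst h1; subst h2
      have hm1 : s ∈ Finset.Icc p1 p2 := by rw [Finset.mem_Icc]; omega
      have hm2 : s - 1 ∈ Finset.Icc p1 p2 := by rw [Finset.mem_Icc]; omega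
      simp only [eq_self_iff_true, and_self, true_and, if_true, hm1, hm2]
      have := hg.2.2.2 s (by rw [Finset.mem_Icc]; omega)
      linarith
    · have hA1 : ∀ ss : ℤ, ¬((p1 = kk ∧ p2 = T) ∧ ss ∈ Finset.Icc kk T) := fun ss hc => hA hc.1
      rw [if_neg (hA1 s), if_neg (hA1 (s - 1)), if_neg hA]
      simp
  · -- hq5
    rintro ⟨p1, p2⟩ hp s hs j hj
    have hs' : s ∈ Finset.Icc p1 p2 := hs
    simp only [qOf_add, qOf_zPt, qOf_yPt, phOf_add, phOf_zPt, phOf_yPt, yOf_add, yOf_zPt,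
      yOf_yPt, zero_add, Prod.mk.injEq]
    by_cases hA : p1 = kk ∧ p2 = T
    · obtain ⟨h1, h2⟩ := hA
      subst h1; subst h2
      simp only [eq_self_iff_true, and_self, true_and, if_true, hs']
      exact le_fmax hN hj
    · have hA1 : ¬((p1 = kk ∧ p2 = T) ∧ s ∈ Finset.Icc kk T) := fun hc => hA hc.1
      rw [if_neg hA1, if_neg hA1, if_neg hA]
      simp
  · -- cost
    simp only [yOf_add, yOf_zPt, yOf_yPt, zOf_add, zOf_zPt, zOf_yPt, phOf_add, phOf_zPt,
      phOf_yPt, zero_add, add_zero]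
    simp_rw [mul_ite, mul_one, mul_zero]
    rw [sum_ite_pair_filter _ _ _ ((kk, T) : ℤ × ℤ), sum_ite_pair _ _ ((t, kk) : ℤ × ℤ),
      sum_phi_single _ ((kk, T) : ℤ × ℤ)]
    have hB : ¬((kk, T) ∈ TK2 t0 T L l ∧ ((kk, T) : ℤ × ℤ).2 ≤ T - 1) := by
      rintro ⟨_, h⟩
      simp only at h
      omega
    rw [if_neg hB, if_pos hmemKT, if_pos hmemTK2]
    simp

lemma good_go (hT : 2 ≤ T) (hL : 1 ≤ L) (hl : 1 ≤ l) (ht0 : 0 ≤ t0) (hN : 1 ≤ N)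
    {t kk e : ℤ} (ht : t ∈ Finset.Icc t0 (T - l - 1)) (hkk : kk ∈ Finset.Icc (t + l + 1) T)
    (he : e ∈ Finset.Icc (kk + L - 1) (T - 1))
    {g : ℤ → ℝ} (hg : EDfeas T Cmin Cmax Vbar V kk e g)
    {c : ℝ} {P : Pt} (hP : Good T L l t0 Cmin Cmax Vbar V N a b S S' e c P) :
    Good T L l t0 Cmin Cmax Vbar V N a b S S' t
      (S (kk - t - 1) + S' (e - kk + 1) + (∑ s ∈ Finset.Icc kk e, fmax N hN a b s 1 (g s)) + c)
      (zPt t kk + yPt kk e g (fun s => fmax N hN a b s 1 (g s)) + P) := by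
  rw [Finset.mem_Icc] at ht hkk he
  have hmemKT : (t, kk) ∈ KT t0 T l := by
    rw [mem_KT, Finset.mem_Icc, Finset.mem_Icc]; omega
  have hmemTK2 : (kk, e) ∈ TK2 t0 T L l := by
    rw [mem_TK2, Finset.mem_Icc, Finset.mem_Icc]; omega
  have hyP : yOf P kk e = 0 := by
    by_cases h : yOf P kk e = 0
    · exact h
    · have := (hP.hysupp kk e h).2; omega
  have hqP : ∀ ss, qOf P kk e ss = 0 := fun ss => (hP.hqy kk e ss hyP).1
  have hphP : ∀ ss, phOf P kk e ss = 0 := fun ss => (hP.hqy kk e ss hyP).2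
  refine ⟨fun s => by simp [hP.hw s], ?_, ?_, ?_, ?_, ?_, ?_, ?_, ?_, ?_, ?_, ?_, ?_, ?_, ?_, ?_, ?_⟩
  · intro t' k'
    simp only [yOf_add, yOf_zPt, yOf_yPt, zero_add]
    by_cases heq : (t', k') = (kk, e)
    · rw [Prod.mk.injEq] at heq
      obtain ⟨h1, h2⟩ := heq; subst h1; subst h2
      rw [if_pos rfl, hyP]
      right; ring
    · rw [if_neg heq, zero_add]
      exact hP.hybin t' k'
  · intro t' k' h
    simp only [yOf_add, yOf_zPt, yOf_yPt, zero_add] at h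
    by_cases heq : (t', k') = (kk, e)
    · rw [Prod.mk.injEq] at heq
      refine ⟨by rw [heq.1, heq.2]; exact hmemTK2, by omega⟩
    · rw [if_neg heq, zero_add] at h
      have := hP.hysupp t' k' h
      exact ⟨this.1, by omega⟩
  · intro k' t'
    simp only [zOf_add, zOf_zPt, zOf_yPt, add_zero]
    by_cases heq : (k', t') = (t, kk)
    · rw [Prod.mk.injEq] at heq
      obtain ⟨h1, h2⟩ := heq; subst h1; subst h2
      have hzP : zOf P k' t' = 0 := by
        by_cases h : zOf P k' t' = 0
        · exact h
        · have := (hP.hzsupp k' t' h).2; omega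
      rw [if_pos rfl, hzP]
      right; ring
    · rw [if_neg heq, zero_add]
      exact hP.hzbin k' t'
  · intro k' t' h
    simp only [zOf_add, zOf_zPt, zOf_yPt, add_zero] at h
    by_cases heq : (k', t') = (t, kk)
    · rw [Prod.mk.injEq] at heq
      refine ⟨by rw [heq.1, heq.2]; exact hmemKT, by omega⟩
    · rw [if_neg heq, zero_add] at h
      have := hP.hzsupp k' t' h
      exact ⟨this.1, by omega⟩
  · intro s
    simp only [thOf_add, thOf_zPt, thOf_yPt, zero_add, add_zero]
    exact hP.hthbin s
  · intro s h
    simp only [thOf_add, thOf_zPt, thOf_yPt, zero_add, add_zero] at h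
    have := hP.hthsupp s h
    exact ⟨by omega, this.2.1, this.2.2⟩
  · -- flowD
    intro s hs
    have hse := hs
    rw [Finset.mem_Icc] at hse
    simp only [zOf_add, zOf_zPt, zOf_yPt, yOf_add, yOf_zPt, yOf_yPt, thOf_add, thOf_zPt,
      thOf_yPt, add_zero, zero_add, Finset.sum_add_distrib]
    rw [sum_ite_pair_filter _ _ (fun _ => (1:ℝ)) (t, kk),
      sum_ite_pair_filter _ _ (fun _ => (1:ℝ)) (kk, e)]
    have hPf := hP.flowD s hs
    by_cases hst : s = t
    · have hA : ((t, kk) ∈ KT t0 T l ∧ ((t, kk) : ℤ × ℤ).1 = s) := ⟨hmemKT, hst.symm⟩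
      have hB : ¬((kk, e) ∈ TK2 t0 T L l ∧ ((kk, e) : ℤ × ℤ).2 = s) := by
        rintro ⟨_, h⟩; simp only at h; omega
      rw [if_pos hA, if_neg hB, if_pos hst]
      rw [if_neg (by omega : ¬s = e)] at hPf
      linarith
    · have hA : ¬((t, kk) ∈ KT t0 T l ∧ ((t, kk) : ℤ × ℤ).1 = s) := by
        rintro ⟨_, h⟩; exact hst h.symm
      rw [if_neg hA, if_neg hst]
      by_cases hse' : s = e
      · have hB : ((kk, e) ∈ TK2 t0 T L l ∧ ((kk, e) : ℤ × ℤ).2 = s) := ⟨hmemTK2, hse'.symm⟩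
        rw [if_pos hB]
        rw [if_pos hse'] at hPf
        linarith
      · have hB : ¬((kk, e) ∈ TK2 t0 T L l ∧ ((kk, e) : ℤ × ℤ).2 = s) := by
          rintro ⟨_, h⟩; exact hse' h.symm
        rw [if_neg hB]
        rw [if_neg hse'] at hPf
        linarith
  · -- flowU
    intro s hs
    simp only [zOf_add, zOf_zPt, zOf_yPt, yOf_add, yOf_zPt, yOf_yPt, add_zero, zero_add,
      Finset.sum_add_distrib]
    rw [sum_ite_pair_filter _ _ (fun _ => (1:ℝ)) (kk, e),
      sum_ite_pair_filter _ _ (fun _ => (1:ℝ)) (t, kk)]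
    have hPf := hP.flowU s hs
    by_cases h : kk = s
    · have hA : ((kk, e) ∈ TK2 t0 T L l ∧ ((kk, e) : ℤ × ℤ).1 = s) := ⟨hmemTK2, h⟩
      have hB : ((t, kk) ∈ KT t0 T l ∧ ((t, kk) : ℤ × ℤ).2 = s) := ⟨hmemKT, h⟩
      rw [if_pos hA, if_pos hB]
      linarith
    · have hA : ¬((kk, e) ∈ TK2 t0 T L l ∧ ((kk, e) : ℤ × ℤ).1 = s) := fun hc => h hc.2
      have hB : ¬((t, kk) ∈ KT t0 T l ∧ ((t, kk) : ℤ × ℤ).2 = s) := fun hc => h hc.2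
      rw [if_neg hA, if_neg hB]
      linarith
  · -- hqsupp
    intro tt kk' ss h
    simp only [qOf_add, qOf_zPt, qOf_yPt, phOf_add, phOf_zPt, phOf_yPt, zero_add]
    have hnew : ¬((tt, kk') = (kk, e) ∧ ss ∈ Finset.Icc kk e) := by
      rintro ⟨heq, hss⟩
      rw [Prod.mk.injEq] at heq
      exact h ⟨by rw [heq.1, heq.2]; exact hmemTK2, by rw [heq.1, heq.2]; exact hss⟩
    rw [if_neg hnew, if_neg hnew, zero_add, zero_add]
    exact hP.hqsupp tt kk' ss h
  · -- hqy
    intro tt kk' ss h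
    simp only [yOf_add, yOf_zPt, yOf_yPt, zero_add] at h
    simp only [qOf_add, qOf_zPt, qOf_yPt, phOf_add, phOf_zPt, phOf_yPt, zero_add]
    by_cases heq : (tt, kk') = (kk, e)
    · rw [if_pos heq] at h
      have hyb := hP.hybin tt kk'
      rcases hyb with h0 | h1
      · rw [h0] at h; norm_num at h
      · rw [h1] at h; norm_num at h
    · have hA : ¬((tt, kk') = (kk, e) ∧ ss ∈ Finset.Icc kk e) := fun hc => heq hc.1
      rw [if_neg heq, zero_add] at h
      rw [if_neg hA, if_neg hA, zero_add, zero_add]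
      exact hP.hqy tt kk' ss h
  · -- hq1
    rintro ⟨p1, p2⟩ hp s hs
    have hs' : s ∈ Finset.Icc p1 p2 := hs
    simp only [qOf_add, qOf_zPt, qOf_yPt, yOf_add, yOf_zPt, yOf_yPt, zero_add, Prod.mk.injEq]
    by_cases hA : p1 = kk ∧ p2 = e
    · obtain ⟨h1, h2⟩ := hA; subst h1; subst h2
      simp only [eq_self_iff_true, and_self, true_and, if_true, hs', hqP, hyP]
      have h2 := hg.1 s hs'
      constructor <;> linarith [h2.1, h2.2]
    · have hA1 : ¬((p1 = kk ∧ p2 = e) ∧ s ∈ Finset.Icc kk e) := fun hc => hA hc.1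
      rw [if_neg hA1, if_neg hA, zero_add, zero_add]
      exact hP.hq1 ⟨p1, p2⟩ hp s hs
  · -- hq2
    rintro ⟨p1, p2⟩ hp
    have hp12 : p1 ≤ p2 := by
      rw [mem_TK2, Finset.mem_Icc, Finset.mem_Icc] at hp; omega
    simp only [qOf_add, qOf_zPt, qOf_yPt, yOf_add, yOf_zPt, yOf_yPt, zero_add, Prod.mk.injEq]
    by_cases hA : p1 = kk ∧ p2 = e
    · obtain ⟨h1, h2⟩ := hA; subst h1; subst h2
      have hm : p1 ∈ Finset.Icc p1 p2 := by rw [Finset.mem_Icc]; omega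
      simp only [eq_self_iff_true, and_self, true_and, if_true, hm, hqP, hyP]
      have := hg.2.1 (by omega)
      linarith
    · have hA1 : ¬((p1 = kk ∧ p2 = e) ∧ p1 ∈ Finset.Icc kk e) := fun hc => hA hc.1
      rw [if_neg hA1, if_neg hA, zero_add, zero_add]
      exact hP.hq2 ⟨p1, p2⟩ hp
  · -- hq3
    rintro ⟨p1, p2⟩ hp hpT
    simp only at hpT
    simp only [qOf_add, qOf_zPt, qOf_yPt, yOf_add, yOf_zPt, yOf_yPt, zero_add, Prod.mk.injEq]
    have hp12 : p1 ≤ p2 := by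
      rw [mem_TK2, Finset.mem_Icc, Finset.mem_Icc] at hp; omega
    by_cases hA : p1 = kk ∧ p2 = e
    · obtain ⟨h1, h2⟩ := hA; subst h1; subst h2
      have hm : p2 ∈ Finset.Icc p1 p2 := by rw [Finset.mem_Icc]; omega
      simp only [eq_self_iff_true, and_self, true_and, if_true, hm, hqP, hyP]
      have := hg.2.2.1 (by omega)
      linarith
    · have hA1 : ¬((p1 = kk ∧ p2 = e) ∧ p2 ∈ Finset.Icc kk e) := fun hc => hA hc.1
      rw [if_neg hA1, if_neg hA, zero_add, zero_add]
      exact hP.hq3 ⟨p1, p2⟩ hp hpT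
  · -- hq4
    rintro ⟨p1, p2⟩ hp s hs
    have hs' : s ∈ Finset.Icc (p1 + 1) p2 := hs
    rw [Finset.mem_Icc] at hs'
    simp only [qOf_add, qOf_zPt, qOf_yPt, yOf_add, yOf_zPt, yOf_yPt, zero_add, Prod.mk.injEq]
    by_cases hA : p1 = kk ∧ p2 = e
    · obtain ⟨h1, h2⟩ := hA; subst h1; subst h2
      have hm1 : s ∈ Finset.Icc p1 p2 := by rw [Finset.mem_Icc]; omega
      have hm2 : s - 1 ∈ Finset.Icc p1 p2 := by rw [Finset.mem_Icc]; omega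
      simp only [eq_self_iff_true, and_self, true_and, if_true, hm1, hm2, hqP, hyP]
      have := hg.2.2.2 s (by rw [Finset.mem_Icc]; omega)
      simpa using this
    · have hA1 : ∀ ss : ℤ, ¬((p1 = kk ∧ p2 = e) ∧ ss ∈ Finset.Icc kk e) := fun ss hc => hA hc.1
      rw [if_neg (hA1 s), if_neg (hA1 (s - 1)), if_neg hA, zero_add, zero_add, zero_add]
      exact hP.hq4 ⟨p1, p2⟩ hp s hs
  · -- hq5
    rintro ⟨p1, p2⟩ hp s hs j hj
    have hs' : s ∈ Finset.Icc p1 p2 := hs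
    simp only [qOf_add, qOf_zPt, qOf_yPt, phOf_add, phOf_zPt, phOf_yPt, yOf_add, yOf_zPt,
      yOf_yPt, zero_add, Prod.mk.injEq]
    by_cases hA : p1 = kk ∧ p2 = e
    · obtain ⟨h1, h2⟩ := hA; subst h1; subst h2
      simp only [eq_self_iff_true, and_self, true_and, if_true, hs', hqP, hphP, hyP]
      rw [add_zero, add_zero, add_zero]
      exact le_fmax hN hj
    · have hA1 : ¬((p1 = kk ∧ p2 = e) ∧ s ∈ Finset.Icc kk e) := fun hc => hA hc.1
      rw [if_neg hA1, if_neg hA1, if_neg hA, zero_add, zero_add, zero_add]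
      exact hP.hq5 ⟨p1, p2⟩ hp s hs j hj
  · -- cost
    simp only [yOf_add, yOf_zPt, yOf_yPt, zOf_add, zOf_zPt, zOf_yPt, phOf_add, phOf_zPt,
      phOf_yPt, zero_add, add_zero]
    simp_rw [mul_add, mul_ite, mul_one, mul_zero, Finset.sum_add_distrib]
    rw [sum_ite_pair_filter _ _ _ ((kk, e) : ℤ × ℤ), sum_ite_pair _ _ ((t, kk) : ℤ × ℤ),
      sum_phi_single _ ((kk, e) : ℤ × ℤ)]
    have hBe : ((kk, e) ∈ TK2 t0 T L l ∧ ((kk, e) : ℤ × ℤ).2 ≤ T - 1) := ⟨hmemTK2, by omega⟩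
    rw [if_pos hBe, if_pos hmemKT, if_pos hmemTK2]
    have hPc := hP.cost
    simp only []
    linarith [hPc]

lemma exDown (hT : 2 ≤ T) (hL : 1 ≤ L) (hl : 1 ≤ l) (ht0 : 0 ≤ t0) (hN : 1 ≤ N)
    (hCC : Cmin ≤ Cmax) (hVbar : Cmin ≤ Vbar) (hV : 0 ≤ V)
    (Vds Vus : ℤ → ℝ)
    (hVd0 : ∀ t ∈ Finset.Icc (T - l) T, Vds t = 0)
    (hVdr : ∀ t ∈ Finset.Icc t0 (T - l - 1),
      Vds t = min 0 (sInf ((fun k => S (k - t - 1) + Vus k) '' (Set.Icc (t + l + 1) T))))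
    (hVu0 : ∀ t ∈ Finset.Icc (T - L + 1) T, Vus t = Cval T Cmin Cmax Vbar V N hN a b t T)
    (hVur : ∀ t ∈ Finset.Icc (t0 + l + 1) (T - L),
      Vus t = min (Cval T Cmin Cmax Vbar V N hN a b t T)
        (sInf ((fun k => S' (k - t + 1) + Cval T Cmin Cmax Vbar V N hN a b t k + Vds k) ''
          (Set.Icc (t + L - 1) (T - 1))))) :
    ∀ n : ℕ, ∀ t : ℤ, (T - 1 - t).toNat ≤ n → t ∈ Finset.Icc t0 (T - 1) →
      ∃ P : Pt, Good T L l t0 Cmin Cmax Vbar V N a b S S' t (Vds t) P := by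
  intro n
  induction n with
  | zero =>
    intro t htn ht
    have ht' := ht
    rw [Finset.mem_Icc] at ht'
    have hteq : T - l ≤ t := by omega
    have h0 : Vds t = 0 := hVd0 t (Finset.mem_Icc.mpr ⟨hteq, by omega⟩)
    exact ⟨thPt t, h0 ▸ good_stop ht⟩
  | succ n ih =>
    intro t htn ht
    have ht' := ht
    rw [Finset.mem_Icc] at ht'
    by_cases hstop : T - l ≤ t
    · have h0 : Vds t = 0 := hVd0 t (Finset.mem_Icc.mpr ⟨hstop, by omega⟩)
      exact ⟨thPt t, h0 ▸ good_stop ht⟩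
    · have htd : t ∈ Finset.Icc t0 (T - l - 1) := Finset.mem_Icc.mpr ⟨ht'.1, by omega⟩
      have hVt := hVdr t htd
      rcases min_choice 0 (sInf ((fun k => S (k - t - 1) + Vus k) '' (Set.Icc (t + l + 1) T)))
        with hmin | hmin
      · rw [hmin] at hVt
        exact ⟨thPt t, hVt ▸ good_stop ht⟩
      · rw [hmin] at hVt
        have hne : ((fun k => S (k - t - 1) + Vus k) '' (Set.Icc (t + l + 1) T)).Nonempty :=
          (Set.nonempty_Icc.mpr (by omega)).image _
        have hfin : ((fun k => S (k - t - 1) + Vus k) '' (Set.Icc (t + l + 1) T)).Finite :=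
          (Set.finite_Icc _ _).image _
        obtain ⟨kk, hkkmem, hkkeq⟩ := hne.csInf_mem hfin
        rw [Set.mem_Icc] at hkkmem
        have hkkeq' : S (kk - t - 1) + Vus kk
            = sInf ((fun k => S (k - t - 1) + Vus k) '' (Set.Icc (t + l + 1) T)) := hkkeq
        rw [← hkkeq'] at hVt
        have hkkI : kk ∈ Finset.Icc (t + l + 1) T := Finset.mem_Icc.mpr ⟨hkkmem.1, hkkmem.2⟩
        -- now unfold Vus kk
        by_cases hkend : T - L + 1 ≤ kk
        · obtain ⟨g, hg, hsum, _⟩ := ED_exists T Cmin Cmax Vbar V N hN a b hCC hVbar hV kk T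
          have hVu : Vus kk = Cval T Cmin Cmax Vbar V N hN a b kk T :=
            hVu0 kk (Finset.mem_Icc.mpr ⟨hkend, hkkmem.2⟩)
          have hcost : S (kk - t - 1) + (∑ s ∈ Finset.Icc kk T, fmax N hN a b s 1 (g s))
              = Vds t := by rw [hsum, hVt, hVu]
          exact ⟨_, hcost ▸ good_goEnd hT hL hl ht0 hN htd hkkI hg⟩
        · have hVu := hVur kk (Finset.mem_Icc.mpr ⟨by omega, by omega⟩)
          rcases min_choice (Cval T Cmin Cmax Vbar V N hN a b kk T)
            (sInf ((fun k => S' (k - kk + 1) + Cval T Cmin Cmax Vbar V N hN a b kk k + Vds k) ''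
              (Set.Icc (kk + L - 1) (T - 1)))) with hmin2 | hmin2
          · rw [hmin2] at hVu
            obtain ⟨g, hg, hsum, _⟩ := ED_exists T Cmin Cmax Vbar V N hN a b hCC hVbar hV kk T
            have hcost : S (kk - t - 1) + (∑ s ∈ Finset.Icc kk T, fmax N hN a b s 1 (g s))
                = Vds t := by rw [hsum, hVt, hVu]
            exact ⟨_, hcost ▸ good_goEnd hT hL hl ht0 hN htd hkkI hg⟩
          · rw [hmin2] at hVu
            have hne2 : ((fun k => S' (k - kk + 1) + Cval T Cmin Cmax Vbar V N hN a b kk k + Vds k) ''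
                (Set.Icc (kk + L - 1) (T - 1))).Nonempty :=
              (Set.nonempty_Icc.mpr (by omega)).image _
            have hfin2 : ((fun k => S' (k - kk + 1) + Cval T Cmin Cmax Vbar V N hN a b kk k + Vds k) ''
                (Set.Icc (kk + L - 1) (T - 1))).Finite :=
              (Set.finite_Icc _ _).image _
            obtain ⟨e, hemem, heeq⟩ := hne2.csInf_mem hfin2
            rw [Set.mem_Icc] at hemem
            have heeq' : S' (e - kk + 1) + Cval T Cmin Cmax Vbar V N hN a b kk e + Vds e
                = sInf ((fun k => S' (k - kk + 1) + Cval T Cmin Cmax Vbar V N hN a b kk k + Vds k) ''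
                  (Set.Icc (kk + L - 1) (T - 1))) := heeq
            rw [← heeq'] at hVu
            have heI : e ∈ Finset.Icc (kk + L - 1) (T - 1) :=
              Finset.mem_Icc.mpr ⟨hemem.1, hemem.2⟩
            obtain ⟨g, hg, hsum, _⟩ := ED_exists T Cmin Cmax Vbar V N hN a b hCC hVbar hV kk e
            obtain ⟨P, hP⟩ := ih e (by omega) (Finset.mem_Icc.mpr ⟨by omega, by omega⟩)
            have hcost : S (kk - t - 1) + S' (e - kk + 1)
                + (∑ s ∈ Finset.Icc kk e, fmax N hN a b s 1 (g s)) + Vds e = Vds t := by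
              rw [hsum, hVt, hVu]; ring
            exact ⟨_, hcost ▸ good_go hT hL hl ht0 hN htd hkkI heI hg hP⟩


end Constructions

section Assembly

variable {T L l t0 s0 : ℤ} {Cmin Cmax Vbar V : ℝ} {N : ℤ} {a b : ℤ → ℤ → ℝ} {S S' : ℤ → ℝ}

lemma TK_disj (ht0 : 0 ≤ t0) (hl : 1 ≤ l) : Disjoint (TK1 t0 T) (TK2 t0 T L l) := by
  rw [Finset.disjoint_left]
  rintro ⟨p1, p2⟩ h1 h2
  rw [mem_TK1] at h1
  rw [mem_TK2, Finset.mem_Icc] at h2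
  omega

lemma sum_TK_split (ht0 : 0 ≤ t0) (hl : 1 ≤ l) (f : ℤ × ℤ → ℝ) :
    (∑ p ∈ TK t0 T L l, f p) = (∑ p ∈ TK1 t0 T, f p) + (∑ p ∈ TK2 t0 T L l, f p) := by
  rw [TK, Finset.sum_union (TK_disj ht0 hl)]

lemma buildFull (hT : 2 ≤ T) (hL : 1 ≤ L) (hl : 1 ≤ l) (ht0 : 0 ≤ t0) (hN : 1 ≤ N)
    (ht0T : t0 ≤ T - 1)
    {t1 : ℤ} (ht1 : t1 ∈ Finset.Icc t0 T) {g : ℤ → ℝ}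
    (hg : EDfeas T Cmin Cmax Vbar V 1 t1 g) {c : ℝ} {P : Pt}
    (hP : Good T L l t0 Cmin Cmax Vbar V N a b S S' t1 c P) :
    memXI T L l t0 Cmin Cmax Vbar V N a b
        (wPt t1 g (fun s => fmax N hN a b s 1 (g s)) + P) ∧
      Gobj T L l t0 s0 S S' (wPt t1 g (fun s => fmax N hN a b s 1 (g s)) + P)
        = (if t1 ≤ T - 1 then S' (t1 + s0) else 0)
          + (∑ s ∈ Finset.Icc 1 t1, fmax N hN a b s 1 (g s)) + c := by
  rw [Finset.mem_Icc] at ht1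
  set gp : ℤ → ℝ := fun s => fmax N hN a b s 1 (g s) with hgp
  have hTK2one : ∀ k : ℤ, ((1 : ℤ), k) ∉ TK2 t0 T L l := by
    intro k hmem
    rw [mem_TK2, Finset.mem_Icc] at hmem
    omega
  have hwq0 : ∀ p1 p2 ss : ℤ, (p1, p2) ∈ TK2 t0 T L l →
      qOf (wPt t1 g gp) p1 p2 ss = 0 ∧ phOf (wPt t1 g gp) p1 p2 ss = 0 := by
    intro p1 p2 ss hmem
    have hne : ¬((p1, p2) = ((1 : ℤ), t1) ∧ ss ∈ Finset.Icc 1 t1) := by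
      rintro ⟨heq, _⟩
      rw [Prod.mk.injEq] at heq
      exact hTK2one p2 (heq.1 ▸ hmem)
    constructor
    · show (if (p1, p2) = ((1 : ℤ), t1) ∧ ss ∈ Finset.Icc 1 t1 then g ss else 0) = 0
      rw [if_neg hne]
    · show (if (p1, p2) = ((1 : ℤ), t1) ∧ ss ∈ Finset.Icc 1 t1 then gp ss else 0) = 0
      rw [if_neg hne]
  have hPq0 : ∀ (k ss : ℤ), qOf P 1 k ss = 0 ∧ phOf P 1 k ss = 0 := by
    intro k ss
    exact hP.hqsupp 1 k ss (fun hc => hTK2one k hc.1)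
  constructor
  · refine ⟨?_, ?_, ?_, ?_, ?_, ?_, ?_, ?_, ?_, ?_, ?_, ?_, ?_, ?_, ?_, ?_, ?_, ?_, ?_, ?_, ?_⟩
    · -- (c1)
      simp only [wOf_add, wOf_wPt, hP.hw, add_zero]
      rw [Finset.sum_ite_eq' (Finset.Icc t0 T) t1 (fun _ => (1:ℝ))]
      rw [if_pos (Finset.mem_Icc.mpr ⟨ht1.1, ht1.2⟩)]
    · -- (c2)
      intro t ht
      simp only [wOf_add, wOf_wPt, hP.hw, add_zero, zOf_add, zOf_wPt, zero_add,
        yOf_add, yOf_wPt, thOf_add, thOf_wPt]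
      have := hP.flowD t ht
      linarith
    · -- (c3)
      intro t ht
      simp only [yOf_add, yOf_wPt, zero_add, zOf_add, zOf_wPt]
      exact hP.flowU t ht
    · -- (c4) TK1
      rintro ⟨p1, p2⟩ hp s hs
      have hp' := hp
      rw [mem_TK1] at hp'
      obtain ⟨hp1, hp2⟩ := hp'
      subst hp1
      rw [Finset.mem_Icc] at hp2
      have hs' : s ∈ Finset.Icc (1 : ℤ) p2 := hs
      simp only [qOf_add, qOf_wPt, wOf_add, wOf_wPt, hP.hw, add_zero, (hPq0 p2 s).1]
      by_cases hk : p2 = t1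
      · subst hk
        simp only [eq_self_iff_true, and_self, true_and, if_true, hs']
        have := hg.1 s hs'
        constructor <;> linarith [this.1, this.2]
      · have hA : ¬(((1 : ℤ), p2) = ((1 : ℤ), t1) ∧ s ∈ Finset.Icc 1 t1) := by
          rintro ⟨heq, _⟩
          rw [Prod.mk.injEq] at heq
          exact hk heq.2
        rw [if_neg hA, if_neg hk]
        simp
    · -- (c4) TK2
      rintro ⟨p1, p2⟩ hp s hs
      simp only [qOf_add, (hwq0 p1 p2 s hp).1, yOf_add, yOf_wPt, zero_add]
      exact hP.hq1 ⟨p1, p2⟩ hp s hs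
    · -- (c5) TK2 first
      rintro ⟨p1, p2⟩ hp
      simp only [qOf_add, (hwq0 p1 p2 p1 hp).1, yOf_add, yOf_wPt, zero_add]
      exact hP.hq2 ⟨p1, p2⟩ hp
    · -- (c5) TK1
      rintro ⟨p1, p2⟩ hp hpT
      have hp' := hp
      rw [mem_TK1] at hp'
      obtain ⟨hp1, hp2⟩ := hp'
      subst hp1
      rw [Finset.mem_Icc] at hp2
      simp only at hpT
      simp only [qOf_add, qOf_wPt, wOf_add, wOf_wPt, hP.hw, add_zero, (hPq0 p2 p2).1]
      by_cases hk : p2 = t1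
      · subst hk
        have hm : p2 ∈ Finset.Icc (1 : ℤ) p2 := by rw [Finset.mem_Icc]; omega
        simp only [eq_self_iff_true, and_self, true_and, if_true, hm]
        have := hg.2.2.1 (by omega)
        linarith
      · have hA : ¬(((1 : ℤ), p2) = ((1 : ℤ), t1) ∧ p2 ∈ Finset.Icc 1 t1) := by
          rintro ⟨heq, _⟩
          rw [Prod.mk.injEq] at heq
          exact hk heq.2
        rw [if_neg hA, if_neg hk]
        simp
    · -- (c5) TK2 last
      rintro ⟨p1, p2⟩ hp hpT
      simp only [qOf_add, (hwq0 p1 p2 p2 hp).1, yOf_add, yOf_wPt, zero_add]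
      exact hP.hq3 ⟨p1, p2⟩ hp hpT
    · -- (c6) TK1
      rintro ⟨p1, p2⟩ hp s hs
      have hp' := hp
      rw [mem_TK1] at hp'
      obtain ⟨hp1, hp2⟩ := hp'
      subst hp1
      rw [Finset.mem_Icc] at hp2
      have hs' : s ∈ Finset.Icc (1 + 1 : ℤ) p2 := hs
      rw [Finset.mem_Icc] at hs'
      simp only [qOf_add, qOf_wPt, wOf_add, wOf_wPt, hP.hw, add_zero, (hPq0 p2 s).1,
        (hPq0 p2 (s - 1)).1]
      by_cases hk : p2 = t1
      · subst hk
        have hm1 : s ∈ Finset.Icc (1 : ℤ) p2 := by rw [Finset.mem_Icc]; omega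
        have hm2 : s - 1 ∈ Finset.Icc (1 : ℤ) p2 := by rw [Finset.mem_Icc]; omega
        simp only [eq_self_iff_true, and_self, true_and, if_true, hm1, hm2]
        have := hg.2.2.2 s (by rw [Finset.mem_Icc]; omega)
        simpa using this
      · have hA : ∀ ss : ℤ, ¬(((1 : ℤ), p2) = ((1 : ℤ), t1) ∧ ss ∈ Finset.Icc 1 t1) := by
          rintro ss ⟨heq, _⟩
          rw [Prod.mk.injEq] at heq
          exact hk heq.2
        rw [if_neg (hA s), if_neg (hA (s - 1)), if_neg hk]
        simp
    · -- (c6) TK2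
      rintro ⟨p1, p2⟩ hp s hs
      simp only [qOf_add, (hwq0 p1 p2 s hp).1, (hwq0 p1 p2 (s - 1) hp).1, yOf_add,
        yOf_wPt, zero_add]
      exact hP.hq4 ⟨p1, p2⟩ hp s hs
    · -- (c7) TK1
      rintro ⟨p1, p2⟩ hp s hs j hj
      have hp' := hp
      rw [mem_TK1] at hp'
      obtain ⟨hp1, hp2⟩ := hp'
      subst hp1
      rw [Finset.mem_Icc] at hp2
      have hs' : s ∈ Finset.Icc (1 : ℤ) p2 := hs
      simp only [qOf_add, qOf_wPt, phOf_add, phOf_wPt, wOf_add, wOf_wPt, hP.hw, add_zero,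
        (hPq0 p2 s).1, (hPq0 p2 s).2]
      by_cases hk : p2 = t1
      · subst hk
        simp only [eq_self_iff_true, and_self, true_and, if_true, hs', add_zero]
        exact le_fmax hN hj
      · have hA : ¬(((1 : ℤ), p2) = ((1 : ℤ), t1) ∧ s ∈ Finset.Icc 1 t1) := by
          rintro ⟨heq, _⟩
          rw [Prod.mk.injEq] at heq
          exact hk heq.2
        rw [if_neg hA, if_neg hA, if_neg hk]
        simp
    · -- (c7) TK2
      rintro ⟨p1, p2⟩ hp s hs j hj
      simp only [qOf_add, (hwq0 p1 p2 s hp).1, (hwq0 p1 p2 s hp).2, phOf_add, yOf_add,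
        yOf_wPt, zero_add]
      exact hP.hq5 ⟨p1, p2⟩ hp s hs j hj
    · -- w nonneg
      intro t ht
      simp only [wOf_add, wOf_wPt, hP.hw, add_zero]
      by_cases h : t = t1 <;> simp [h]
    · -- y nonneg
      rintro ⟨p1, p2⟩ hp
      simp only [yOf_add, yOf_wPt, zero_add]
      rcases hP.hybin p1 p2 with h | h <;> rw [h] <;> norm_num
    · -- z nonneg
      rintro ⟨p1, p2⟩ hp
      simp only [zOf_add, zOf_wPt, zero_add]
      rcases hP.hzbin p1 p2 with h | h <;> rw [h] <;> norm_num
    · -- θ nonneg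
      intro t ht
      simp only [thOf_add, thOf_wPt, zero_add]
      rcases hP.hthbin t with h | h <;> rw [h] <;> norm_num
    · -- w supp
      intro t ht
      simp only [wOf_add, wOf_wPt, hP.hw, add_zero]
      rw [if_neg]
      intro h
      subst h
      exact ht (Finset.mem_Icc.mpr ⟨ht1.1, ht1.2⟩)
    · -- y supp
      intro t k h
      simp only [yOf_add, yOf_wPt, zero_add]
      by_cases hy : yOf P t k = 0
      · exact hy
      · exact absurd (hP.hysupp t k hy).1 h
    · -- z supp
      intro k t h
      simp only [zOf_add, zOf_wPt, zero_add]
      by_cases hz : zOf P k t = 0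
      · exact hz
      · exact absurd (hP.hzsupp k t hz).1 h
    · -- θ supp
      intro t ht
      simp only [thOf_add, thOf_wPt, zero_add]
      by_cases hth : thOf P t = 0
      · exact hth
      · have := hP.hthsupp t hth
        exact absurd (Finset.mem_Icc.mpr ⟨this.2.1, this.2.2⟩) ht
    · -- q/φ supp
      intro t k s h
      simp only [qOf_add, qOf_wPt, phOf_add, phOf_wPt]
      have hA : ¬((t, k) = ((1 : ℤ), t1) ∧ s ∈ Finset.Icc 1 t1) := by
        rintro ⟨heq, hss⟩
        rw [Prod.mk.injEq] at heq
        have h1t : (1 : ℤ) ≤ t1 := by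
          rw [Finset.mem_Icc] at hss; omega
        have ht1mem : ((1 : ℤ), t1) ∈ TK1 t0 T := by
          rw [mem_TK1, Finset.mem_Icc]
          refine ⟨by trivial, by omega, by omega⟩
        rcases h with h | h
        · apply h
          rw [heq.1, heq.2]
          exact Finset.mem_union_left _ ht1mem
        · apply h
          rw [heq.1, heq.2]
          exact hss
      have hB : ¬((t, k) ∈ TK2 t0 T L l ∧ s ∈ Finset.Icc t k) := by
        rintro ⟨hmem, hss⟩
        rcases h with h | h
        · exact h (Finset.mem_union_right _ hmem)
        · exact h hss
      have := hP.hqsupp t k s hB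
      rw [if_neg hA, if_neg hA, zero_add, zero_add]
      exact this
  · -- Gobj value
    unfold Gobj
    rw [sum_TK_split ht0 hl]
    simp only [wOf_add, wOf_wPt, hP.hw, add_zero, yOf_add, yOf_wPt, zero_add,
      zOf_add, zOf_wPt, phOf_add, phOf_wPt]
    have h1 : (∑ t ∈ Finset.Icc t0 (T - 1), S' (t + s0) * if t = t1 then (1:ℝ) else 0)
        = if t1 ≤ T - 1 then S' (t1 + s0) else 0 := by
      simp_rw [mul_ite, mul_one, mul_zero]
      rw [Finset.sum_ite_eq' (Finset.Icc t0 (T - 1)) t1 (fun t => S' (t + s0))]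
      by_cases h : t1 ≤ T - 1
      · rw [if_pos (Finset.mem_Icc.mpr ⟨ht1.1, h⟩), if_pos h]
      · rw [if_neg (fun hc => h (Finset.mem_Icc.mp hc).2), if_neg h]
    have h4a : (∑ p ∈ TK1 t0 T, ∑ s ∈ Finset.Icc p.1 p.2,
        ((if (p.1, p.2) = ((1 : ℤ), t1) ∧ s ∈ Finset.Icc 1 t1 then gp s else 0) + phOf P p.1 p.2 s))
        = ∑ s ∈ Finset.Icc 1 t1, gp s := by
      have hz : ∀ p ∈ TK1 t0 T, ∀ s ∈ Finset.Icc p.1 p.2, phOf P p.1 p.2 s = 0 := by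
        rintro ⟨p1, p2⟩ hp s hs
        rw [mem_TK1] at hp
        obtain ⟨hp1, _⟩ := hp
        subst hp1
        exact (hPq0 p2 s).2
      calc (∑ p ∈ TK1 t0 T, ∑ s ∈ Finset.Icc p.1 p.2,
            ((if (p.1, p.2) = ((1 : ℤ), t1) ∧ s ∈ Finset.Icc 1 t1 then gp s else 0) + phOf P p.1 p.2 s))
          = ∑ p ∈ TK1 t0 T, ∑ s ∈ Finset.Icc p.1 p.2,
            (if (p.1, p.2) = ((1 : ℤ), t1) ∧ s ∈ Finset.Icc ((1 : ℤ), t1).1 ((1 : ℤ), t1).2 then gp s else 0) := by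
            refine Finset.sum_congr rfl fun p hp => Finset.sum_congr rfl fun s hs => ?_
            rw [hz p hp s hs, add_zero]
        _ = if ((1 : ℤ), t1) ∈ TK1 t0 T then (∑ s ∈ Finset.Icc ((1 : ℤ), t1).1 ((1 : ℤ), t1).2, gp s) else 0 :=
            sum_phi_single _ _ _
        _ = ∑ s ∈ Finset.Icc 1 t1, gp s := by
            by_cases h : 1 ≤ t1
            · rw [if_pos]
              rw [mem_TK1, Finset.mem_Icc]
              exact ⟨by trivial, by omega, by omega⟩
            · rw [if_neg, Finset.Icc_eq_empty (by omega), Finset.sum_empty]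
              rw [mem_TK1, Finset.mem_Icc]
              rintro ⟨_, hh, _⟩
              omega
    have h4b : (∑ p ∈ TK2 t0 T L l, ∑ s ∈ Finset.Icc p.1 p.2,
        ((if (p.1, p.2) = ((1 : ℤ), t1) ∧ s ∈ Finset.Icc 1 t1 then gp s else 0) + phOf P p.1 p.2 s))
        = ∑ p ∈ TK2 t0 T L l, ∑ s ∈ Finset.Icc p.1 p.2, phOf P p.1 p.2 s := by
      refine Finset.sum_congr rfl fun p hp => Finset.sum_congr rfl fun s hs => ?_
      rw [if_neg, zero_add]
      rintro ⟨heq, _⟩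
      rw [Prod.mk.injEq] at heq
      obtain ⟨pp1, pp2⟩ := p
      simp only at heq
      exact hTK2one pp2 (heq.1 ▸ hp)
    rw [h1, h4a, h4b]
    have := hP.cost
    linarith
lemma Cval_empty (hCC : Cmin ≤ Cmax) (hVbar : Cmin ≤ Vbar) (hV : 0 ≤ V) {t k : ℤ}
    (h : k < t) : Cval T Cmin Cmax Vbar V N hN a b t k = 0 := by
  obtain ⟨g, _, hsum, _⟩ := ED_exists T Cmin Cmax Vbar V N hN a b hCC hVbar hV t k
  rw [← hsum, Finset.Icc_eq_empty (by omega), Finset.sum_empty]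

lemma interval_phi_lb {T : ℤ} (hN : 1 ≤ N) (hCmin : 0 ≤ Cmin) (hCC : Cmin ≤ Cmax)
    (hVbar : Cmin ≤ Vbar) (hV : 0 ≤ V) (t k : ℤ)
    (q ph : ℤ → ℝ) (u : ℝ) (hu : 0 ≤ u)
    (hb : ∀ s ∈ Finset.Icc t k, Cmin * u ≤ q s ∧ q s ≤ Cmax * u)
    (hstart : 2 ≤ t → q t ≤ Vbar * u)
    (hend : k ≤ T - 1 → q k ≤ Vbar * u)
    (hramp : ∀ s ∈ Finset.Icc (t + 1) k, |q s - q (s - 1)| ≤ V * u)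
    (hph : ∀ s ∈ Finset.Icc t k, ∀ j ∈ Finset.Icc 1 N, a j s * q s + b j s * u ≤ ph s) :
    Cval T Cmin Cmax Vbar V N hN a b t k * u ≤ ∑ s ∈ Finset.Icc t k, ph s := by
  rcases eq_or_lt_of_le hu with hu0 | hupos
  · -- u = 0
    rw [← hu0, mul_zero]
    apply Finset.sum_nonneg
    intro s hs
    have hq0 : q s = 0 := by
      have := hb s hs
      rw [← hu0] at this
      simp only [mul_zero] at this
      linarith [this.1, this.2]
    have := hph s hs 1 (Finset.mem_Icc.mpr ⟨le_refl 1, hN⟩)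
    rw [hq0, ← hu0] at this
    simpa using this
  · -- u > 0
    set xg : ℤ → ℝ := fun s => q s / u with hxg
    have hfeas : EDfeas T Cmin Cmax Vbar V t k xg := by
      refine ⟨?_, ?_, ?_, ?_⟩
      · intro s hs
        have := hb s hs
        constructor
        · rw [le_div_iff₀ hupos]
          exact this.1
        · rw [div_le_iff₀ hupos]
          exact this.2
      · intro h2
        rw [div_le_iff₀ hupos]
        exact hstart h2
      · intro h2
        rw [div_le_iff₀ hupos]
        exact hend h2
      · intro s hs
        have : xg s - xg (s - 1) = (q s - q (s - 1)) / u := by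
          simp only [hxg]
          rw [div_sub_div_same]
        rw [this, abs_div, abs_of_pos hupos, div_le_iff₀ hupos]
        exact hramp s hs
    obtain ⟨_, _, _, hopt⟩ := ED_exists T Cmin Cmax Vbar V N hN a b hCC hVbar hV t k
    have hCle := hopt xg hfeas
    have hphs : ∀ s ∈ Finset.Icc t k, fmax N hN a b s 1 (xg s) * u ≤ ph s := by
      intro s hs
      rw [← le_div_iff₀ hupos]
      apply fmax_le hN
      intro j hj
      have h1 : a j s * xg s + b j s * 1 = (a j s * q s + b j s * u) / u := by
        rw [hxg]
        field_simp
      rw [h1, div_le_div_iff_of_pos_right hupos]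
      exact hph s hs j hj
    calc Cval T Cmin Cmax Vbar V N hN a b t k * u
        ≤ (∑ s ∈ Finset.Icc t k, fmax N hN a b s 1 (xg s)) * u :=
          mul_le_mul_of_nonneg_right hCle hu
      _ = ∑ s ∈ Finset.Icc t k, fmax N hN a b s 1 (xg s) * u := Finset.sum_mul _ _ _
      _ ≤ ∑ s ∈ Finset.Icc t k, ph s := Finset.sum_le_sum hphs

lemma lower_bound (hT : 2 ≤ T) (hL : 1 ≤ L) (hl : 1 ≤ l) (ht0 : 0 ≤ t0) (ht0T : t0 ≤ T - 1)
    (hCmin : 0 ≤ Cmin) (hCC : Cmin ≤ Cmax) (hVbar : Cmin ≤ Vbar) (hV : 0 ≤ V)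
    (hN : 1 ≤ N) (hS : ∀ n, 0 ≤ S n) (hS' : ∀ n, 0 ≤ S' n)
    (Vds Vus : ℤ → ℝ) (vstar : ℝ)
    (hVd0 : ∀ t ∈ Finset.Icc (T - l) T, Vds t = 0)
    (hVdr : ∀ t ∈ Finset.Icc t0 (T - l - 1),
      Vds t = min 0 (sInf ((fun k => S (k - t - 1) + Vus k) '' (Set.Icc (t + l + 1) T))))
    (hVu0 : ∀ t ∈ Finset.Icc (T - L + 1) T, Vus t = Cval T Cmin Cmax Vbar V N hN a b t T)
    (hVur : ∀ t ∈ Finset.Icc (t0 + l + 1) (T - L),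
      Vus t = min (Cval T Cmin Cmax Vbar V N hN a b t T)
        (sInf ((fun k => S' (k - t + 1) + Cval T Cmin Cmax Vbar V N hN a b t k + Vds k) ''
          (Set.Icc (t + L - 1) (T - 1)))))
    (hvstar : vstar = min (Cval T Cmin Cmax Vbar V N hN a b 1 T)
      (sInf ((fun t => S' (t + s0) + Cval T Cmin Cmax Vbar V N hN a b 1 t + Vds t) '' (Set.Icc t0 (T - 1)))))
    (x : Pt) (hx : memXI T L l t0 Cmin Cmax Vbar V N a b x) :
    vstar ≤ Gobj T L l t0 s0 S S' x := by
  obtain ⟨hc1, hc2, hc3, hc4a, hc4b, hc5a, hc5b, hc5c, hc6a, hc6b, hc7a, hc7b, hwnn, hynn,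
    hznn, hthnn, hwsupp, hysupp, hzsupp, hthsupp, hqsupp⟩ := hx
  set Cv : ℤ → ℤ → ℝ := Cval T Cmin Cmax Vbar V N hN a b with hCv
  set Vde : ℤ → ℝ := fun tt => if tt ≤ T - 1 then Vds tt else 0 with hVde
  -- φ lower bounds
  have hD1 : ∀ p ∈ TK1 t0 T,
      Cv p.1 p.2 * wOf x p.2 ≤ ∑ s ∈ Finset.Icc p.1 p.2, phOf x p.1 p.2 s := by
    rintro ⟨p1, p2⟩ hp
    have hp' := hp
    rw [mem_TK1, Finset.mem_Icc] at hp'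
    obtain ⟨hp1, hp2⟩ := hp'
    subst hp1
    exact interval_phi_lb hN hCmin hCC hVbar hV 1 p2 (fun s => qOf x 1 p2 s)
      (fun s => phOf x 1 p2 s) (wOf x p2)
      (hwnn p2 (Finset.mem_Icc.mpr ⟨by omega, by omega⟩))
      (fun s hs => hc4a (1, p2) hp s hs)
      (fun h2 => absurd h2 (by omega))
      (fun h2 => hc5b (1, p2) hp h2)
      (fun s hs => hc6a (1, p2) hp s hs)
      (fun s hs j hj => hc7a (1, p2) hp s hs j hj)
  have hD2 : ∀ p ∈ TK2 t0 T L l,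
      Cv p.1 p.2 * yOf x p.1 p.2 ≤ ∑ s ∈ Finset.Icc p.1 p.2, phOf x p.1 p.2 s := by
    rintro ⟨p1, p2⟩ hp
    have hp' := hp
    rw [mem_TK2, Finset.mem_Icc, Finset.mem_Icc] at hp'
    exact interval_phi_lb hN hCmin hCC hVbar hV p1 p2 (fun s => qOf x p1 p2 s)
      (fun s => phOf x p1 p2 s) (yOf x p1 p2)
      (hynn (p1, p2) hp)
      (fun s hs => hc4b (p1, p2) hp s hs)
      (fun _ => hc5a (p1, p2) hp)
      (fun h2 => hc5c (p1, p2) hp h2)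
      (fun s hs => hc6b (p1, p2) hp s hs)
      (fun s hs j hj => hc7b (p1, p2) hp s hs j hj)
  -- scalar DP inequalities
  have hbdd0 : BddBelow ((fun t => S' (t + s0) + Cv 1 t + Vds t) '' (Set.Icc t0 (T - 1))) :=
    ((Set.finite_Icc _ _).image _).bddBelow
  have hI1 : ∀ t ∈ Finset.Icc t0 T,
      vstar ≤ (if t ≤ T - 1 then S' (t + s0) else 0) + (if 1 ≤ t then Cv 1 t else 0) + Vde t := by
    intro t ht
    rw [Finset.mem_Icc] at ht
    by_cases hT1 : t ≤ T - 1
    · have hmem : S' (t + s0) + Cv 1 t + Vds t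
          ∈ ((fun t => S' (t + s0) + Cv 1 t + Vds t) '' (Set.Icc t0 (T - 1))) :=
        ⟨t, Set.mem_Icc.mpr ⟨ht.1, hT1⟩, rfl⟩
      have h1 : vstar ≤ S' (t + s0) + Cv 1 t + Vds t := by
        rw [hvstar]
        exact le_trans (min_le_right _ _) (csInf_le hbdd0 hmem)
      rw [if_pos hT1]
      simp only [hVde, if_pos hT1]
      by_cases h1t : 1 ≤ t
      · rw [if_pos h1t]; linarith
      · rw [if_neg h1t]
        have h0 : Cv 1 t = 0 := Cval_empty hCC hVbar hV (by omega)
        rw [h0] at h1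
        linarith
    · have hTT : t = T := by omega
      rw [if_neg hT1, if_pos (by omega : (1:ℤ) ≤ t)]
      simp only [hVde, if_neg hT1]
      rw [hvstar, hTT]
      have := min_le_left (Cv 1 T)
        (sInf ((fun t => S' (t + s0) + Cv 1 t + Vds t) '' (Set.Icc t0 (T - 1))))
      linarith
  have hI2 : ∀ p ∈ TK2 t0 T L l,
      Vus p.1 ≤ (if p.2 ≤ T - 1 then S' (p.2 - p.1 + 1) else 0) + Cv p.1 p.2 + Vde p.2 := by
    rintro ⟨p1, p2⟩ hp
    have hp' := hp
    rw [mem_TK2, Finset.mem_Icc, Finset.mem_Icc] at hp'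
    simp only
    by_cases hT1 : p2 ≤ T - 1
    · have hminlt : p1 + L - 1 ≤ T := by omega
      have hp2lb : p1 + L - 1 ≤ p2 := by omega
      have hp1ub : p1 ≤ T - L := by omega
      have hVu := hVur p1 (Finset.mem_Icc.mpr ⟨hp'.1.1, hp1ub⟩)
      have hbdd2 : BddBelow ((fun k => S' (k - p1 + 1) + Cv p1 k + Vds k) ''
          (Set.Icc (p1 + L - 1) (T - 1))) := ((Set.finite_Icc _ _).image _).bddBelow
      have hmem : S' (p2 - p1 + 1) + Cv p1 p2 + Vds p2
          ∈ ((fun k => S' (k - p1 + 1) + Cv p1 k + Vds k) '' (Set.Icc (p1 + L - 1) (T - 1))) :=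
        ⟨p2, Set.mem_Icc.mpr ⟨hp2lb, hT1⟩, rfl⟩
      rw [if_pos hT1]
      simp only [hVde, if_pos hT1]
      rw [hVu]
      exact le_trans (min_le_right _ _) (csInf_le hbdd2 hmem)
    · have hTT : p2 = T := by omega
      rw [if_neg hT1]
      simp only [hVde, if_neg hT1]
      rw [hTT]
      by_cases hend : T - L + 1 ≤ p1
      · rw [hVu0 p1 (Finset.mem_Icc.mpr ⟨hend, hp'.1.2⟩)]
        linarith
      · have hVu := hVur p1 (Finset.mem_Icc.mpr ⟨hp'.1.1, by omega⟩)
        rw [hVu]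
        have := min_le_left (Cv p1 T)
          (sInf ((fun k => S' (k - p1 + 1) + Cv p1 k + Vds k) '' (Set.Icc (p1 + L - 1) (T - 1))))
        linarith
  have hI3 : ∀ p ∈ KT t0 T l, Vde p.1 ≤ S (p.2 - p.1 - 1) + Vus p.2 := by
    rintro ⟨p1, p2⟩ hp
    have hp' := hp
    rw [mem_KT, Finset.mem_Icc, Finset.mem_Icc] at hp'
    simp only [hVde, if_pos (by omega : p1 ≤ T - 1)]
    have hVd := hVdr p1 (Finset.mem_Icc.mpr ⟨hp'.1.1, hp'.1.2⟩)
    have hbdd3 : BddBelow ((fun k => S (k - p1 - 1) + Vus k) '' (Set.Icc (p1 + l + 1) T)) :=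
      ((Set.finite_Icc _ _).image _).bddBelow
    have hmem : S (p2 - p1 - 1) + Vus p2
        ∈ ((fun k => S (k - p1 - 1) + Vus k) '' (Set.Icc (p1 + l + 1) T)) :=
      ⟨p2, Set.mem_Icc.mpr ⟨hp'.2.1, hp'.2.2⟩, rfl⟩
    rw [hVd]
    exact le_trans (min_le_right _ _) (csInf_le hbdd3 hmem)
  -- sum rewrites
  have hA : (∑ t ∈ Finset.Icc t0 (T - 1), S' (t + s0) * wOf x t)
      = ∑ t ∈ Finset.Icc t0 T, (if t ≤ T - 1 then S' (t + s0) else 0) * wOf x t := by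
    rw [Finset.sum_congr rfl (fun t ht => by
      rw [if_pos (Finset.mem_Icc.mp ht).2] :
        ∀ t ∈ Finset.Icc t0 (T-1), S' (t + s0) * wOf x t
          = (if t ≤ T - 1 then S' (t + s0) else 0) * wOf x t)]
    exact Finset.sum_subset (Finset.Icc_subset_Icc_right (by omega))
      (fun t htb hts => by
        rw [Finset.mem_Icc] at htb
        rw [Finset.mem_Icc] at hts
        rw [if_neg (by omega), zero_mul])
  have hCvW : (∑ p ∈ TK1 t0 T, Cv p.1 p.2 * wOf x p.2)
      = ∑ t ∈ Finset.Icc t0 T, (if 1 ≤ t then Cv 1 t else 0) * wOf x t := by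
    rw [TK1, Finset.sum_image (fun k _ k' _ h => by
      rw [Prod.mk.injEq] at h
      exact h.2)]
    rw [Finset.sum_congr rfl (fun k hk => by
      rw [Finset.mem_Icc] at hk
      rw [if_pos (by omega : (1:ℤ) ≤ k)] :
        ∀ k ∈ Finset.Icc (max t0 1) T, Cv ((1:ℤ), k).1 ((1:ℤ), k).2 * wOf x ((1:ℤ), k).2
          = (if 1 ≤ k then Cv 1 k else 0) * wOf x k)]
    exact Finset.sum_subset (Finset.Icc_subset_Icc (by omega) (by omega))
      (fun t htb hts => by
        rw [Finset.mem_Icc] at htb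
        rw [Finset.mem_Icc] at hts
        rw [if_neg (by omega), zero_mul])
  have hB : (∑ p ∈ (TK2 t0 T L l).filter (fun p => p.2 ≤ T - 1),
        S' (p.2 - p.1 + 1) * yOf x p.1 p.2)
      = ∑ p ∈ TK2 t0 T L l, (if p.2 ≤ T - 1 then S' (p.2 - p.1 + 1) else 0) * yOf x p.1 p.2 := by
    rw [Finset.sum_filter]
    exact Finset.sum_congr rfl (fun p _ => by rw [ite_mul, zero_mul])
  -- main pointwise comparisons
  have hW : ∑ t ∈ Finset.Icc t0 T, (vstar - Vde t) * wOf x t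
      ≤ (∑ t ∈ Finset.Icc t0 T, (if t ≤ T - 1 then S' (t + s0) else 0) * wOf x t)
        + ∑ t ∈ Finset.Icc t0 T, (if 1 ≤ t then Cv 1 t else 0) * wOf x t := by
    rw [← Finset.sum_add_distrib]
    refine Finset.sum_le_sum fun t ht => ?_
    rw [← add_mul]
    have := hI1 t ht
    exact mul_le_mul_of_nonneg_right (by linarith) (hwnn t ht)
  have hY : ∑ p ∈ TK2 t0 T L l, (Vus p.1 - Vde p.2) * yOf x p.1 p.2
      ≤ (∑ p ∈ TK2 t0 T L l, (if p.2 ≤ T - 1 then S' (p.2 - p.1 + 1) else 0) * yOf x p.1 p.2)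
        + ∑ p ∈ TK2 t0 T L l, Cv p.1 p.2 * yOf x p.1 p.2 := by
    rw [← Finset.sum_add_distrib]
    refine Finset.sum_le_sum fun p hp => ?_
    rw [← add_mul]
    have := hI2 p hp
    exact mul_le_mul_of_nonneg_right (by linarith) (hynn p hp)
  have hZ : ∑ p ∈ KT t0 T l, (Vde p.1 - Vus p.2) * zOf x p.1 p.2
      ≤ ∑ p ∈ KT t0 T l, S (p.2 - p.1 - 1) * zOf x p.1 p.2 := by
    refine Finset.sum_le_sum fun p hp => ?_
    have := hI3 p hp
    exact mul_le_mul_of_nonneg_right (by linarith) (hznn p hp)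
  -- fiber decompositions
  have hfib1 : (∑ p ∈ TK2 t0 T L l, Vde p.2 * yOf x p.1 p.2)
      = ∑ k ∈ Finset.Icc t0 T, Vde k *
          ∑ p ∈ (TK2 t0 T L l).filter (fun p => p.2 = k), yOf x p.1 p.2 := by
    rw [← Finset.sum_fiberwise_of_maps_to (g := fun p : ℤ × ℤ => p.2)
      (fun p hp => by
        rw [mem_TK2, Finset.mem_Icc, Finset.mem_Icc] at hp
        show p.2 ∈ Finset.Icc t0 T
        rw [Finset.mem_Icc]
        omega) (fun p => Vde p.2 * yOf x p.1 p.2)]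
    refine Finset.sum_congr rfl fun k _ => ?_
    rw [Finset.mul_sum]
    refine Finset.sum_congr rfl fun p hp => ?_
    rw [(Finset.mem_filter.mp hp).2]
  have hfib2 : (∑ p ∈ TK2 t0 T L l, Vus p.1 * yOf x p.1 p.2)
      = ∑ t ∈ Finset.Icc (t0 + l + 1) T, Vus t *
          ∑ p ∈ (TK2 t0 T L l).filter (fun p => p.1 = t), yOf x p.1 p.2 := by
    rw [← Finset.sum_fiberwise_of_maps_to (g := fun p : ℤ × ℤ => p.1)
      (fun p hp => by
        rw [mem_TK2, Finset.mem_Icc, Finset.mem_Icc] at hp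
        show p.1 ∈ Finset.Icc (t0 + l + 1) T
        rw [Finset.mem_Icc]
        omega) (fun p => Vus p.1 * yOf x p.1 p.2)]
    refine Finset.sum_congr rfl fun k _ => ?_
    rw [Finset.mul_sum]
    refine Finset.sum_congr rfl fun p hp => ?_
    rw [(Finset.mem_filter.mp hp).2]
  have hfib3 : (∑ p ∈ KT t0 T l, Vde p.1 * zOf x p.1 p.2)
      = ∑ k ∈ Finset.Icc t0 T, Vde k *
          ∑ p ∈ (KT t0 T l).filter (fun p => p.1 = k), zOf x p.1 p.2 := by
    rw [← Finset.sum_fiberwise_of_maps_to (g := fun p : ℤ × ℤ => p.1)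
      (fun p hp => by
        rw [mem_KT, Finset.mem_Icc, Finset.mem_Icc] at hp
        show p.1 ∈ Finset.Icc t0 T
        rw [Finset.mem_Icc]
        omega) (fun p => Vde p.1 * zOf x p.1 p.2)]
    refine Finset.sum_congr rfl fun k _ => ?_
    rw [Finset.mul_sum]
    refine Finset.sum_congr rfl fun p hp => ?_
    rw [(Finset.mem_filter.mp hp).2]
  have hfib4 : (∑ p ∈ KT t0 T l, Vus p.2 * zOf x p.1 p.2)
      = ∑ t ∈ Finset.Icc (t0 + l + 1) T, Vus t *
          ∑ p ∈ (KT t0 T l).filter (fun p => p.2 = t), zOf x p.1 p.2 := by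
    rw [← Finset.sum_fiberwise_of_maps_to (g := fun p : ℤ × ℤ => p.2)
      (fun p hp => by
        rw [mem_KT, Finset.mem_Icc, Finset.mem_Icc] at hp
        show p.2 ∈ Finset.Icc (t0 + l + 1) T
        rw [Finset.mem_Icc]
        omega) (fun p => Vus p.2 * zOf x p.1 p.2)]
    refine Finset.sum_congr rfl fun k _ => ?_
    rw [Finset.mul_sum]
    refine Finset.sum_congr rfl fun p hp => ?_
    rw [(Finset.mem_filter.mp hp).2]
  -- flow conservation consequences
  have hflow0 : ∀ t ∈ Finset.Icc (t0 + l + 1) T,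
      Vus t * (∑ p ∈ (TK2 t0 T L l).filter (fun p => p.1 = t), yOf x p.1 p.2)
        - Vus t * (∑ p ∈ (KT t0 T l).filter (fun p => p.2 = t), zOf x p.1 p.2) = 0 := by
    intro t ht
    have := hc3 t ht
    rw [← mul_sub]
    rw [this, mul_zero]
  have hflowD : ∀ t ∈ Finset.Icc t0 T,
      0 ≤ Vde t * ((∑ p ∈ (KT t0 T l).filter (fun p => p.1 = t), zOf x p.1 p.2)
        - (∑ p ∈ (TK2 t0 T L l).filter (fun p => p.2 = t), yOf x p.1 p.2) - wOf x t) := by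
    intro t ht
    rw [Finset.mem_Icc] at ht
    by_cases hT1 : t ≤ T - 1
    · have hc2t := hc2 t (Finset.mem_Icc.mpr ⟨ht.1, hT1⟩)
      simp only [hVde, if_pos hT1]
      by_cases hdeep : t ≤ T - l - 1
      · have hVneg : Vds t ≤ 0 := by
          rw [hVdr t (Finset.mem_Icc.mpr ⟨ht.1, hdeep⟩)]
          exact min_le_left _ _
        have hth : 0 ≤ thOf x t := hthnn t (Finset.mem_Icc.mpr ⟨ht.1, hdeep⟩)
        have hexpr : (∑ p ∈ (KT t0 T l).filter (fun p => p.1 = t), zOf x p.1 p.2)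
            - (∑ p ∈ (TK2 t0 T L l).filter (fun p => p.2 = t), yOf x p.1 p.2) - wOf x t
            = -thOf x t := by linarith
        rw [hexpr]
        exact mul_nonneg_of_nonpos_of_nonpos hVneg (by linarith)
      · have hV0 : Vds t = 0 := hVd0 t (Finset.mem_Icc.mpr ⟨by omega, by omega⟩)
        rw [hV0, zero_mul]
    · simp only [hVde, if_neg hT1, zero_mul]
      exact le_refl 0
  -- final assembly
  have hGdef : Gobj T L l t0 s0 S S' x
      = (∑ t ∈ Finset.Icc t0 (T - 1), S' (t + s0) * wOf x t)
      + (∑ p ∈ (TK2 t0 T L l).filter (fun p => p.2 ≤ T - 1), S' (p.2 - p.1 + 1) * yOf x p.1 p.2)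
      + (∑ p ∈ KT t0 T l, S (p.2 - p.1 - 1) * zOf x p.1 p.2)
      + ((∑ p ∈ TK1 t0 T, ∑ s ∈ Finset.Icc p.1 p.2, phOf x p.1 p.2 s)
        + (∑ p ∈ TK2 t0 T L l, ∑ s ∈ Finset.Icc p.1 p.2, phOf x p.1 p.2 s)) := by
    unfold Gobj
    rw [sum_TK_split ht0 hl]
  have hphi1 : (∑ p ∈ TK1 t0 T, Cv p.1 p.2 * wOf x p.2)
      ≤ ∑ p ∈ TK1 t0 T, ∑ s ∈ Finset.Icc p.1 p.2, phOf x p.1 p.2 s := Finset.sum_le_sum hD1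
  have hphi2 : (∑ p ∈ TK2 t0 T L l, Cv p.1 p.2 * yOf x p.1 p.2)
      ≤ ∑ p ∈ TK2 t0 T L l, ∑ s ∈ Finset.Icc p.1 p.2, phOf x p.1 p.2 s := Finset.sum_le_sum hD2
  -- expand the three "potential" sums
  have hSW : (∑ t ∈ Finset.Icc t0 T, (vstar - Vde t) * wOf x t)
      = vstar * (∑ t ∈ Finset.Icc t0 T, wOf x t)
        - ∑ t ∈ Finset.Icc t0 T, Vde t * wOf x t := by
    rw [Finset.mul_sum, ← Finset.sum_sub_distrib]
    exact Finset.sum_congr rfl fun t _ => by ring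
  have hSY : (∑ p ∈ TK2 t0 T L l, (Vus p.1 - Vde p.2) * yOf x p.1 p.2)
      = (∑ p ∈ TK2 t0 T L l, Vus p.1 * yOf x p.1 p.2)
        - ∑ p ∈ TK2 t0 T L l, Vde p.2 * yOf x p.1 p.2 := by
    rw [← Finset.sum_sub_distrib]
    exact Finset.sum_congr rfl fun p _ => by ring
  have hSZ : (∑ p ∈ KT t0 T l, (Vde p.1 - Vus p.2) * zOf x p.1 p.2)
      = (∑ p ∈ KT t0 T l, Vde p.1 * zOf x p.1 p.2)
        - ∑ p ∈ KT t0 T l, Vus p.2 * zOf x p.1 p.2 := by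
    rw [← Finset.sum_sub_distrib]
    exact Finset.sum_congr rfl fun p _ => by ring
  have hZer : (∑ t ∈ Finset.Icc (t0 + l + 1) T,
      (Vus t * (∑ p ∈ (TK2 t0 T L l).filter (fun p => p.1 = t), yOf x p.1 p.2)
        - Vus t * (∑ p ∈ (KT t0 T l).filter (fun p => p.2 = t), zOf x p.1 p.2))) = 0 :=
    Finset.sum_eq_zero hflow0
  have hNon : 0 ≤ ∑ t ∈ Finset.Icc t0 T,
      Vde t * ((∑ p ∈ (KT t0 T l).filter (fun p => p.1 = t), zOf x p.1 p.2)
        - (∑ p ∈ (TK2 t0 T L l).filter (fun p => p.2 = t), yOf x p.1 p.2) - wOf x t) :=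
    Finset.sum_nonneg hflowD
  have hexpand : (∑ t ∈ Finset.Icc t0 T,
      Vde t * ((∑ p ∈ (KT t0 T l).filter (fun p => p.1 = t), zOf x p.1 p.2)
        - (∑ p ∈ (TK2 t0 T L l).filter (fun p => p.2 = t), yOf x p.1 p.2) - wOf x t))
      = (∑ k ∈ Finset.Icc t0 T, Vde k *
          ∑ p ∈ (KT t0 T l).filter (fun p => p.1 = k), zOf x p.1 p.2)
        - (∑ k ∈ Finset.Icc t0 T, Vde k *
          ∑ p ∈ (TK2 t0 T L l).filter (fun p => p.2 = k), yOf x p.1 p.2)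
        - ∑ t ∈ Finset.Icc t0 T, Vde t * wOf x t := by
    rw [← Finset.sum_sub_distrib, ← Finset.sum_sub_distrib]
    exact Finset.sum_congr rfl fun t _ => by ring
  have hZer2 : (∑ t ∈ Finset.Icc (t0 + l + 1) T,
      Vus t * (∑ p ∈ (TK2 t0 T L l).filter (fun p => p.1 = t), yOf x p.1 p.2))
      - (∑ t ∈ Finset.Icc (t0 + l + 1) T,
        Vus t * (∑ p ∈ (KT t0 T l).filter (fun p => p.2 = t), zOf x p.1 p.2)) = 0 := by
    rw [← Finset.sum_sub_distrib]
    exact hZer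
  -- put everything together
  rw [hGdef]
  rw [hc1] at hSW
  calc vstar = vstar * 1 + 0 + 0 := by ring
    _ ≤ vstar * 1
        + (∑ t ∈ Finset.Icc t0 T,
          Vde t * ((∑ p ∈ (KT t0 T l).filter (fun p => p.1 = t), zOf x p.1 p.2)
            - (∑ p ∈ (TK2 t0 T L l).filter (fun p => p.2 = t), yOf x p.1 p.2) - wOf x t))
        + ((∑ t ∈ Finset.Icc (t0 + l + 1) T,
          Vus t * (∑ p ∈ (TK2 t0 T L l).filter (fun p => p.1 = t), yOf x p.1 p.2))
          - (∑ t ∈ Finset.Icc (t0 + l + 1) T,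
            Vus t * (∑ p ∈ (KT t0 T l).filter (fun p => p.2 = t), zOf x p.1 p.2))) := by
        rw [hZer2]
        linarith [hNon]
    _ = (∑ t ∈ Finset.Icc t0 T, (vstar - Vde t) * wOf x t)
        + (∑ p ∈ TK2 t0 T L l, (Vus p.1 - Vde p.2) * yOf x p.1 p.2)
        + (∑ p ∈ KT t0 T l, (Vde p.1 - Vus p.2) * zOf x p.1 p.2) := by
        rw [hSW, hSY, hSZ, hexpand, hfib1, hfib2, hfib3, hfib4]
        ring
    _ ≤ ((∑ t ∈ Finset.Icc t0 T, (if t ≤ T - 1 then S' (t + s0) else 0) * wOf x t)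
          + ∑ t ∈ Finset.Icc t0 T, (if 1 ≤ t then Cv 1 t else 0) * wOf x t)
        + ((∑ p ∈ TK2 t0 T L l, (if p.2 ≤ T - 1 then S' (p.2 - p.1 + 1) else 0) * yOf x p.1 p.2)
          + ∑ p ∈ TK2 t0 T L l, Cv p.1 p.2 * yOf x p.1 p.2)
        + ∑ p ∈ KT t0 T l, S (p.2 - p.1 - 1) * zOf x p.1 p.2 := by
        linarith [hW, hY, hZ]
    _ ≤ _ := by
        rw [← hA, ← hCvW, ← hB]
        linarith [hphi1, hphi2]

def zeroPt : Pt := (0, fun _ _ => 0, fun _ _ => 0, 0, fun _ _ _ => 0, fun _ _ _ => 0)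

lemma good_sinkT (hT : 2 ≤ T) :
    Good T L l t0 Cmin Cmax Vbar V N a b S S' T 0 zeroPt := by
  refine ⟨fun s => rfl, fun t' k' => Or.inl rfl, fun t' k' h => absurd rfl h,
    fun k' t' => Or.inl rfl, fun k' t' h => absurd rfl h,
    fun s => Or.inl rfl, fun s h => absurd rfl h,
    fun s hs => ?_, fun s hs => by simp [zeroPt, yOf, zOf],
    fun tt kk ss _ => ⟨rfl, rfl⟩, fun tt kk ss _ => ⟨rfl, rfl⟩,
    fun p hp s hs => by simp [zeroPt, qOf, yOf], fun p hp => by simp [zeroPt, qOf, yOf],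
    fun p hp _ => by simp [zeroPt, qOf, yOf], fun p hp s hs => by simp [zeroPt, qOf, yOf],
    fun p hp s hs j hj => by simp [zeroPt, qOf, phOf, yOf], by simp [zeroPt, yOf, zOf, phOf]⟩
  rw [Finset.mem_Icc] at hs
  have : ¬(s = T) := by omega
  rw [if_neg this]
  simp [zeroPt, zOf, yOf, thOf]

end Assembly

theorem euc_min_eq_dp' (T L l s0 t0 : ℤ) (Cmin Cmax Vbar V : ℝ) (N : ℤ)
    (a b : ℤ → ℤ → ℝ) (S S' : ℤ → ℝ)
    (hT : 2 ≤ T) (hL : 1 ≤ L) (hl : 1 ≤ l) (hs0 : 1 ≤ s0)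
    (ht0 : t0 = max (L - s0) 0) (ht0T : t0 ≤ T - 1)
    (hCmin : 0 ≤ Cmin) (hCC : Cmin ≤ Cmax) (hVbar : Cmin ≤ Vbar) (hV : 0 ≤ V)
    (hN : 1 ≤ N) (hS : ∀ n, 0 ≤ S n) (hS' : ∀ n, 0 ≤ S' n)
    (Vds Vus : ℤ → ℝ) (vstar : ℝ)
    (hVd0 : ∀ t ∈ Finset.Icc (T - l) T, Vds t = 0)
    (hVdr : ∀ t ∈ Finset.Icc t0 (T - l - 1),
      Vds t = min 0 (sInf ((fun k => S (k - t - 1) + Vus k) '' (Set.Icc (t + l + 1) T))))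
    (hVu0 : ∀ t ∈ Finset.Icc (T - L + 1) T, Vus t = Cval T Cmin Cmax Vbar V N hN a b t T)
    (hVur : ∀ t ∈ Finset.Icc (t0 + l + 1) (T - L),
      Vus t = min (Cval T Cmin Cmax Vbar V N hN a b t T)
        (sInf ((fun k => S' (k - t + 1) + Cval T Cmin Cmax Vbar V N hN a b t k + Vds k) ''
          (Set.Icc (t + L - 1) (T - 1)))))
    (hvstar : vstar = min (Cval T Cmin Cmax Vbar V N hN a b 1 T)
      (sInf ((fun t => S' (t + s0) + Cval T Cmin Cmax Vbar V N hN a b 1 t + Vds t) '' (Set.Icc t0 (T - 1))))) :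
    ∃ xm : Pt, memXI T L l t0 Cmin Cmax Vbar V N a b xm ∧
      (∀ x : Pt, memXI T L l t0 Cmin Cmax Vbar V N a b x → Gobj T L l t0 s0 S S' xm ≤ Gobj T L l t0 s0 S S' x) ∧
      Gobj T L l t0 s0 S S' xm = vstar := by
  have ht0nn : 0 ≤ t0 := ht0 ▸ le_max_right _ _
  have hlb := lower_bound hT hL hl ht0nn ht0T hCmin hCC hVbar hV hN hS hS' Vds Vus vstar
    hVd0 hVdr hVu0 hVur hvstar
  rcases min_choice (Cval T Cmin Cmax Vbar V N hN a b 1 T)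
    (sInf ((fun t => S' (t + s0) + Cval T Cmin Cmax Vbar V N hN a b 1 t + Vds t) '' (Set.Icc t0 (T - 1))))
    with hm | hm
  · -- vstar = C(1,T): stay on forever
    obtain ⟨g, hg, hsum, _⟩ := ED_exists T Cmin Cmax Vbar V N hN a b hCC hVbar hV 1 T
    obtain ⟨hmem, hval⟩ := buildFull (s0 := s0) hT hL hl ht0nn hN ht0T
      (Finset.mem_Icc.mpr ⟨by omega, le_refl T⟩) hg (good_sinkT hT)
    refine ⟨_, hmem, ?_, ?_⟩
    · intro x hx
      have := hlb x hx
      rw [hval, hsum]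
      have hvv : vstar = Cval T Cmin Cmax Vbar V N hN a b 1 T := by rw [hvstar, hm]
      rw [if_neg (by omega : ¬(T ≤ T - 1))] at *
      linarith
    · rw [hval, hsum, hvstar, hm, if_neg (by omega : ¬(T ≤ T - 1))]
      ring
  · -- vstar attained by a shutdown at t1
    have hne : ((fun t => S' (t + s0) + Cval T Cmin Cmax Vbar V N hN a b 1 t + Vds t) ''
        (Set.Icc t0 (T - 1))).Nonempty := (Set.nonempty_Icc.mpr (by omega)).image _
    have hfin : ((fun t => S' (t + s0) + Cval T Cmin Cmax Vbar V N hN a b 1 t + Vds t) ''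
        (Set.Icc t0 (T - 1))).Finite := (Set.finite_Icc _ _).image _
    obtain ⟨t1, ht1mem, ht1eq⟩ := hne.csInf_mem hfin
    rw [Set.mem_Icc] at ht1mem
    have ht1eq' : S' (t1 + s0) + Cval T Cmin Cmax Vbar V N hN a b 1 t1 + Vds t1
        = sInf ((fun t => S' (t + s0) + Cval T Cmin Cmax Vbar V N hN a b 1 t + Vds t) ''
          (Set.Icc t0 (T - 1))) := ht1eq
    obtain ⟨P, hP⟩ := exDown hT hL hl ht0nn hN hCC hVbar hV Vds Vus hVd0 hVdr hVu0 hVur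
      (T - 1 - t1).toNat t1 le_rfl (Finset.mem_Icc.mpr ⟨ht1mem.1, ht1mem.2⟩)
    obtain ⟨g, hg, hsum, _⟩ := ED_exists T Cmin Cmax Vbar V N hN a b hCC hVbar hV 1 t1
    obtain ⟨hmem, hval⟩ := buildFull (s0 := s0) hT hL hl ht0nn hN ht0T
      (Finset.mem_Icc.mpr ⟨ht1mem.1, by omega⟩) hg hP
    have hveq : Gobj T L l t0 s0 S S' (wPt t1 g (fun s => fmax N hN a b s 1 (g s)) + P)
        = vstar := by
      rw [hval, hsum, if_pos (by omega : t1 ≤ T - 1), hvstar, hm, ← ht1eq']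
    refine ⟨_, hmem, ?_, hveq⟩
    intro x hx
    rw [hveq]
    exact hlb x hx


/-- the minimum of the EUC objective `G` over `X_I` is attained
and equals the dynamic-programming value `V_up*(0)`. -/
theorem euc_min_eq_dp (T L l s0 t0 : ℤ) (Cmin Cmax Vbar V : ℝ) (N : ℤ)
    (a b : ℤ → ℤ → ℝ) (S S' : ℤ → ℝ)
    (hT : 2 ≤ T) (hL : 1 ≤ L) (hl : 1 ≤ l) (hs0 : 1 ≤ s0)
    (ht0 : t0 = max (L - s0) 0) (ht0T : t0 ≤ T - 1)
    (hCmin : 0 ≤ Cmin) (hCC : Cmin ≤ Cmax) (hVbar : Cmin ≤ Vbar) (hV : 0 ≤ V)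
    (hN : 1 ≤ N) (hS : ∀ n, 0 ≤ S n) (hS' : ∀ n, 0 ≤ S' n)
    (Vds Vus : ℤ → ℝ) (vstar : ℝ)
    (hVd0 : ∀ t ∈ Finset.Icc (T - l) T, Vds t = 0)
    (hVdr : ∀ t ∈ Finset.Icc t0 (T - l - 1),
      Vds t = min 0 (sInf ((fun k => S (k - t - 1) + Vus k) '' (Set.Icc (t + l + 1) T))))
    (hVu0 : ∀ t ∈ Finset.Icc (T - L + 1) T, Vus t = Cval T Cmin Cmax Vbar V N hN a b t T)
    (hVur : ∀ t ∈ Finset.Icc (t0 + l + 1) (T - L),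
      Vus t = min (Cval T Cmin Cmax Vbar V N hN a b t T)
        (sInf ((fun k => S' (k - t + 1) + Cval T Cmin Cmax Vbar V N hN a b t k + Vds k) ''
          (Set.Icc (t + L - 1) (T - 1)))))
    (hvstar : vstar = min (Cval T Cmin Cmax Vbar V N hN a b 1 T)
      (sInf ((fun t => S' (t + s0) + Cval T Cmin Cmax Vbar V N hN a b 1 t + Vds t) '' (Set.Icc t0 (T - 1))))) :
    ∃ xm : Pt, memXI T L l t0 Cmin Cmax Vbar V N a b xm ∧
      (∀ x : Pt, memXI T L l t0 Cmin Cmax Vbar V N a b x → Gobj T L l t0 s0 S S' xm ≤ Gobj T L l t0 s0 S S' x) ∧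
      Gobj T L l t0 s0 S S' xm = vstar := by
  exact euc_min_eq_dp' T L l s0 t0 Cmin Cmax Vbar V N a b S S' hT hL hl hs0 ht0 ht0T
    hCmin hCC hVbar hV hN hS hS' Vds Vus vstar hVd0 hVdr hVu0 hVur hvstar

end EUC
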